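/- arXiv:1008.1592 — 3 statements merged into one kernel-verified Lean document; each statement's English description precedes it below -/
import Mathlib

section
/- Let c(X) = (1+X)(1−X)^{−1} be the Cayley map. The pushforward under c of the restriction of μ to 𝔭 equals the restriction to 1 + 𝔭 of the multiplicative Haar measure d^×x = |x|^{−1} dμ(x); equivalently, for every function f : K → ℂ integrable on 1 + 𝔭 with respect to d^×x, ∫_{1+𝔭} f(x) d^×x = ∫_{𝔭} f(c(X)) dμ(X). -/
open MeasureTheory
open scoped Classical

noncomputable section

variable {K : Type}

/-- The Cayley map `X ↦ (1 + X)(1 - X)⁻¹`. -/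
def cay [Field K] (X : K) : K := (1 + X) * (1 - X)⁻¹

/-- `pSet q i` is the `i`-th power `𝔭^i` of the maximal ideal, as a subset of `K`:
the set of `x` with `‖x‖ ≤ q ^ (-i)` (for `i = 0` this is the ring of integers `O`). -/
def pSet [NormedField K] (q : ℕ) (i : ℤ) : Set K := {x | ‖x‖ ≤ (q : ℝ) ^ (-i)}

/-- `R` is a set of representatives in `O` for the residue field `O/𝔭`. -/
def IsResidueSystem [NormedField K] (R : Finset K) : Prop :=
  (∀ x ∈ R, ‖x‖ ≤ 1) ∧ ∀ y : K, ‖y‖ ≤ 1 → ∃! x, x ∈ R ∧ ‖y - x‖ < 1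

/-- `R` is a set of representatives for `𝔭^i/𝔭^(i+1)`. -/
def IsPResidueSystem [NormedField K] (q : ℕ) (i : ℤ) (R : Finset K) : Prop :=
  (∀ x ∈ R, ‖x‖ ≤ (q : ℝ) ^ (-i)) ∧
    ∀ y : K, ‖y‖ ≤ (q : ℝ) ^ (-i) → ∃! c, c ∈ R ∧ ‖y - c‖ ≤ (q : ℝ) ^ (-(i + 1))

/-- The quadratic character `η` of the residue field, evaluated at the residue of a unit
`u` of `O`: it is `1` if `u` is a square modulo the maximal ideal and `-1` otherwise. -/
def etaK [NormedField K] (u : K) : ℂ := if ∃ y : K, ‖y * y - u‖ < 1 then 1 else -1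

/-- The character `sgn_ϖ` of `K^×`: `sgn_ϖ(uϖ^n) = η(ū)·η(-1)^n` for `u ∈ O^×`, `n ∈ ℤ`. -/
def sgnP [NormedField K] (ord : K → ℤ) (ϖ : K) (x : K) : ℂ :=
  etaK (x * ϖ ^ (-ord x)) * etaK (-1 : K) ^ ord x

/-- The unramified quadratic character `sgn_ε(x) = (-1)^(ord x)`. -/
def sgnE [NormedField K] (ord : K → ℤ) (x : K) : ℂ := (-1 : ℂ) ^ ord x

/-- `ν^{1/2}(x) = |x|^{1/2}`. -/
def nuHalf [NormedField K] (x : K) : ℂ := (Real.sqrt ‖x‖ : ℂ)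

/-- The normalized Gauss sum `G_{ϖ'}(Ψ) = q^{-1/2} Σ_{X ∈ O/𝔭} Ψ((-ϖ')^d · X²)`,
where `d` is the depth of `Ψ`, computed using the residue system `R`. -/
def gaussSumK [NormedField K] (q : ℕ) (Ψ : K → ℂ) (ϖ' : K) (d : ℤ) (R : Finset K) : ℂ :=
  (Real.sqrt q : ℂ)⁻¹ * ∑ X ∈ R, Ψ ((-ϖ') ^ d * X ^ 2)

/-- The `p`-adic Bessel function `J_χ(u,v)`: the unconditional sum over `n ∈ ℤ` of the
integrals of `Φ(ux + vx⁻¹)·χ(x)` over the shells `{ord x = n}` against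
`d^×x = ‖x‖⁻¹ dμ(x)`. -/
def bessel [NormedField K] [MeasurableSpace K] (μ : Measure K) (Φ : K → ℂ)
    (ord : K → ℤ) (χ : K → ℂ) (u v : K) : ℂ :=
  ∑' n : ℤ, ∫ x in {x : K | x ≠ 0 ∧ ord x = n},
    Φ (u * x + v * x⁻¹) * χ x * (‖x‖ : ℂ)⁻¹ ∂μ

/-- The character `sgn_θ` of `K^×`: identically `1` if `θ` is a square, and otherwise
the character whose kernel is exactly the set of nonzero values of the norm form
`a² - b²θ`. -/
def sgnTheta [Field K] (θ : K) (x : K) : ℂ :=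
  if ∃ a b : K, x = a ^ 2 - b ^ 2 * θ then 1 else -1

/-- `J^θ_χ = (J_χ + J_{χ·sgn_θ})/2`. -/
def besselTheta [NormedField K] [MeasurableSpace K] (μ : Measure K) (Φ : K → ℂ)
    (ord : K → ℤ) (θ : K) (χ : K → ℂ) (u v : K) : ℂ :=
  (bessel μ Φ ord χ u v + bessel μ Φ ord (fun x => χ x * sgnTheta θ x) u v) / 2

/-- The mock Fourier transform `M(Y)` of the orbital integral of `X* = β·√θ`, evaluated at
`Y = s·√θ'`: the unconditional sum over `n ∈ ℤ` of the integrals over the parts of the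
shells `{ord x = n}` lying in the image of the norm form `a² - b²θ`, against
`d^×x = ‖x‖⁻¹ dμ(x)`, of the unconditional sums over `k ∈ ℤ` of the integrals of
`Φ(βs(xθ' + x⁻¹θ - x⁻¹t²))` over the shells `{ord t = k}` against `dμ(t)`. -/
def mockM [NormedField K] [MeasurableSpace K] (μ : Measure K) (Φ : K → ℂ)
    (ord : K → ℤ) (θ β s θ' : K) : ℂ :=
  ∑' n : ℤ, ∫ x in {x : K | (x ≠ 0 ∧ ord x = n) ∧ ∃ a b : K, x = a ^ 2 - b ^ 2 * θ},
      (∑' k : ℤ, ∫ t in {t : K | t ≠ 0 ∧ ord t = k},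
          Φ (β * s * (x * θ' + x⁻¹ * θ - x⁻¹ * t ^ 2)) ∂μ) * (‖x‖ : ℂ)⁻¹ ∂μ

/-- The standard torus `T_θ ≤ SL₂(K)`, as a set of matrices. -/
def torusSet [Field K] (θ : K) : Set (Matrix (Fin 2) (Fin 2) K) :=
  {A | ∃ a b : K, a ^ 2 - b ^ 2 * θ = 1 ∧ A = Matrix.of ![![a, b], ![b * θ, a]]}

/-- `Q₃(T) = -T(T² + T + 1)`. -/
def Q3 (T : ℂ) : ℂ := -T * (T ^ 2 + T + 1)
open Metric
namespace CayleyAux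

variable {K : Type} [NontriviallyNormedField K] [IsUltrametricDist K]

lemma norm_add_eq_left {a b : K} (h : ‖b‖ < ‖a‖) : ‖a + b‖ = ‖a‖ := by
  rw [IsUltrametricDist.norm_add_eq_max_of_norm_ne_norm h.ne']
  exact max_eq_left h.le

lemma norm_two_le_one : ‖(2 : K)‖ ≤ 1 := by
  have : (2 : K) = 1 + 1 := by norm_num
  rw [this]
  simpa using IsUltrametricDist.norm_add_le_max (1 : K) 1

lemma norm_two_eq_one {q : ℕ} (hq_odd : Odd q)
    (hfin : ∃ R : Finset K, IsResidueSystem R ∧ R.card = q) : ‖(2 : K)‖ = 1 := by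
  refine le_antisymm norm_two_le_one (not_lt.mp fun h2 => ?_)
  obtain ⟨R, ⟨hR1, hR2⟩, hcard⟩ := hfin
  have hone : ∀ a ∈ R, ‖a + 1‖ ≤ 1 := fun a ha => by
    refine (IsUltrametricDist.norm_add_le_max a 1).trans ?_
    simp [hR1 a ha]
  have key : ∑ x ∈ R, (1 : ZMod 2) = 0 := by
    refine Finset.sum_involution (fun a ha => (hR2 (a + 1) (hone a ha)).choose) ?_ ?_ ?_ ?_
    · intro a ha; decide
    · intro a ha _
      intro hEq
      have hspec := (hR2 (a + 1) (hone a ha)).choose_spec.1.2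
      have hEq' : (hR2 (a + 1) (hone a ha)).choose = a := hEq
      rw [hEq'] at hspec
      simp [add_sub_cancel_left] at hspec
    · intro a ha; exact (hR2 (a + 1) (hone a ha)).choose_spec.1.1
    · intro a ha
      set b := (hR2 (a + 1) (hone a ha)).choose with hb
      have hbspec := (hR2 (a + 1) (hone a ha)).choose_spec.1
      -- show choose for (b+1) equals a
      refine ((hR2 (b + 1) (hone b hbspec.1)).choose_spec.2 a ⟨ha, ?_⟩).symm
      have : b + 1 - a = -(a + 1 - b) + 2 := by ring
      rw [this]
      calc ‖-(a + 1 - b) + 2‖ ≤ max ‖-(a + 1 - b)‖ ‖(2:K)‖ :=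
            IsUltrametricDist.norm_add_le_max _ _
        _ < 1 := by rw [norm_neg]; exact max_lt hbspec.2 h2
  rw [Finset.sum_const, nsmul_eq_mul, mul_one, hcard] at key
  have : (2 : ℕ) ∣ q := (ZMod.natCast_eq_zero_iff q 2).mp key
  exact (Nat.not_even_iff_odd.mpr hq_odd) (even_iff_two_dvd.mpr this)

lemma ball_subset_ball' {c₁ c₂ : K} {r₁ r₂ : ℝ} (hr : r₁ ≤ r₂) {x : K}
    (h₁ : x ∈ closedBall c₁ r₁) (h₂ : x ∈ closedBall c₂ r₂) :
    closedBall c₁ r₁ ⊆ closedBall c₂ r₂ := by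
  intro y hy
  rw [mem_closedBall] at *
  calc dist y c₂ ≤ max (dist y c₁) (dist c₁ c₂) := IsUltrametricDist.dist_triangle_max _ _ _
    _ ≤ max (dist y c₁) (max (dist c₁ x) (dist x c₂)) := by
        exact max_le_max le_rfl (IsUltrametricDist.dist_triangle_max _ _ _)
    _ ≤ r₂ := by
        rw [dist_comm c₁ x]
        exact max_le (hy.trans hr) (max_le (h₁.trans hr) h₂)

lemma ball_eq_of_mem {c c' : K} {r : ℝ} (h : c' ∈ closedBall c r) :
    closedBall c r = closedBall c' r := by
  have hr : 0 ≤ r := dist_nonneg.trans (mem_closedBall.mp h)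
  have h' : c ∈ closedBall c' r := mem_closedBall.mpr (by
    rw [dist_comm]; exact mem_closedBall.mp h)
  exact Set.Subset.antisymm (ball_subset_ball' le_rfl h (mem_closedBall_self hr))
    (ball_subset_ball' le_rfl h' (mem_closedBall_self hr))

def ballFam (K : Type) [NontriviallyNormedField K] (b : ℝ) : Set (Set K) :=
  {C | ∃ (c : K) (m : ℤ), C = closedBall c (b ^ m)}

lemma isPiSystem_ballFam {b : ℝ} (hb : 1 < b) : IsPiSystem (ballFam K b) := by
  rintro s ⟨c₁, m₁, rfl⟩ t ⟨c₂, m₂, rfl⟩ hst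
  obtain ⟨x, hx₁, hx₂⟩ := hst
  rcases le_total m₁ m₂ with h | h
  · have hsub : closedBall c₁ (b ^ m₁) ⊆ closedBall c₂ (b ^ m₂) :=
      ball_subset_ball' (zpow_le_zpow_right₀ hb.le h) hx₁ hx₂
    rw [Set.inter_eq_left.mpr hsub]; exact ⟨c₁, m₁, rfl⟩
  · have hsub : closedBall c₂ (b ^ m₂) ⊆ closedBall c₁ (b ^ m₁) :=
      ball_subset_ball' (zpow_le_zpow_right₀ hb.le h) hx₂ hx₁
    rw [Set.inter_eq_right.mpr hsub]; exact ⟨c₂, m₂, rfl⟩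

lemma countable_ballFam [TopologicalSpace.SeparableSpace K] {b : ℝ} (hb : 1 < b) :
    (ballFam K b).Countable := by
  have hb0 : (0:ℝ) < b := lt_trans one_pos hb
  have hrw : ballFam K b = ⋃ m : ℤ, {C | ∃ c : K, C = closedBall c (b ^ m)} := by
    ext C
    simp only [ballFam, Set.mem_setOf_eq, Set.mem_iUnion]
    exact ⟨fun ⟨c, m, h⟩ => ⟨m, c, h⟩, fun ⟨m, c, h⟩ => ⟨c, m, h⟩⟩
  rw [hrw]
  refine Set.countable_iUnion fun m => ?_
  have hpd : ({C | ∃ c : K, C = closedBall c (b ^ m)}).PairwiseDisjoint id := by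
    intro D₁ hD₁ D₂ hD₂ hne
    obtain ⟨c₁, rfl⟩ := hD₁
    obtain ⟨c₂, rfl⟩ := hD₂
    simp only [Function.onFun, id]
    rw [Set.disjoint_left]
    intro x hx₁ hx₂
    exact hne (by rw [ball_eq_of_mem hx₁, ← ball_eq_of_mem hx₂])
  refine hpd.countable_of_isOpen ?_ ?_
  · rintro D ⟨c, rfl⟩; exact IsUltrametricDist.isOpen_closedBall _ (zpow_pos hb0 m).ne'
  · rintro D ⟨c, rfl⟩; exact ⟨c, mem_closedBall_self (zpow_pos hb0 m).le⟩

lemma generateFrom_ballFam [MeasurableSpace K] [BorelSpace K]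
    [TopologicalSpace.SeparableSpace K] {b : ℝ} (hb : 1 < b) :
    ‹MeasurableSpace K› = MeasurableSpace.generateFrom (ballFam K b) := by
  have hb0 : (0:ℝ) < b := lt_trans one_pos hb
  refine le_antisymm ?_ ?_
  · rw [BorelSpace.measurable_eq (α := K), borel]
    refine MeasurableSpace.generateFrom_le fun U hU => ?_
    have hUnion : U = ⋃₀ {D | D ∈ ballFam K b ∧ D ⊆ U} := by
      apply Set.Subset.antisymm
      · intro x hx
        obtain ⟨ε, hε, hball⟩ := Metric.isOpen_iff.mp hU x hx
        obtain ⟨n, hn⟩ := exists_pow_lt_of_lt_one hε (inv_lt_one_of_one_lt₀ hb)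
        have hrn : b ^ (-(n:ℤ)) = b⁻¹ ^ n := by
          rw [zpow_neg, zpow_natCast, inv_pow]
        refine ⟨closedBall x (b ^ (-(n:ℤ))), ⟨⟨x, -(n:ℤ), rfl⟩, ?_⟩,
          mem_closedBall_self (zpow_pos hb0 _).le⟩
        refine fun y hy => hball ?_
        rw [mem_ball]
        exact lt_of_le_of_lt (hrn ▸ mem_closedBall.mp hy) hn
      · rintro x ⟨D, ⟨_, hDU⟩, hxD⟩
        exact hDU hxD
    rw [hUnion]
    refine MeasurableSet.sUnion ?_ fun D hD => MeasurableSpace.measurableSet_generateFrom hD.1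
    exact (countable_ballFam hb).mono fun D hD => hD.1
  · refine MeasurableSpace.generateFrom_le ?_
    rintro D ⟨c, m, rfl⟩
    exact measurableSet_closedBall

end CayleyAux

/-- the Cayley map carries the additive Haar measure on `𝔭` to the
multiplicative Haar measure `d^×x = |x|⁻¹ dμ(x)` on `1 + 𝔭`. -/
theorem cayley_map_measure
    [NontriviallyNormedField K] [IsUltrametricDist K]
    [CompleteSpace K] [LocallyCompactSpace K] [MeasurableSpace K] [BorelSpace K]
    (q : ℕ) (hq_odd : Odd q) (hq_one : 1 < q)
    (hfin : ∃ R : Finset K, IsResidueSystem R ∧ R.card = q)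
    (ord : K → ℤ) (hord : ∀ x : K, x ≠ 0 → ‖x‖ = (q : ℝ) ^ (-ord x))
    (ϖ : K) (hϖ0 : ϖ ≠ 0) (hϖ1 : ord ϖ = 1)
    (μ : Measure K) [μ.IsAddHaarMeasure] (hμO : μ {x : K | ‖x‖ ≤ 1} = 1) :
    (Measure.map (cay : K → K) (μ.restrict (pSet q 1)) =
        (μ.withDensity fun x => ENNReal.ofReal ‖x‖⁻¹).restrict
          {x : K | x - 1 ∈ pSet q 1}) ∧
      ∀ f : K → ℂ,
        IntegrableOn f {x : K | x - 1 ∈ pSet q 1}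
            (μ.withDensity fun x => ENNReal.ofReal ‖x‖⁻¹) →
          ∫ x in {x : K | x - 1 ∈ pSet q 1}, f x
              ∂(μ.withDensity fun x => ENNReal.ofReal ‖x‖⁻¹) =
            ∫ X in pSet q 1, f (cay X) ∂μ := by
  classical
  have hqR : (1:ℝ) < (q:ℝ) := by exact_mod_cast hq_one
  have hq0 : (0:ℝ) < (q:ℝ) := lt_trans one_pos hqR
  have hρ0 : (0:ℝ) < (q:ℝ) ^ (-(1:ℤ)) := zpow_pos hq0 _
  have hρ1 : (q:ℝ) ^ (-(1:ℤ)) < 1 := by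
    rw [zpow_neg, zpow_one]
    exact inv_lt_one_of_one_lt₀ hqR
  have hPeq : pSet q 1 = Metric.closedBall (0:K) ((q:ℝ) ^ (-(1:ℤ))) := by
    ext x
    simp [pSet, Metric.mem_closedBall, dist_zero_right]
  have hseq : {x : K | x - 1 ∈ pSet q 1} = Metric.closedBall (1:K) ((q:ℝ) ^ (-(1:ℤ))) := by
    ext x
    simp [pSet, Metric.mem_closedBall, dist_eq_norm]
  have h2 : ‖(2:K)‖ = 1 := CayleyAux.norm_two_eq_one hq_odd hfin
  have h2ne : (2:K) ≠ 0 := by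
    intro h; rw [h, norm_zero] at h2; norm_num at h2
  have hnorm_s : ∀ x ∈ Metric.closedBall (1:K) ((q:ℝ) ^ (-(1:ℤ))), ‖x‖ = 1 := by
    intro x hx
    have hx' : ‖x - 1‖ ≤ (q:ℝ) ^ (-(1:ℤ)) := by
      rwa [Metric.mem_closedBall, dist_eq_norm] at hx
    have hxe : x = 1 + (x - 1) := by ring
    rw [hxe, CayleyAux.norm_add_eq_left (by rw [norm_one]; exact lt_of_le_of_lt hx' hρ1), norm_one]
  have honesub : ∀ X : K, ‖X‖ ≤ (q:ℝ) ^ (-(1:ℤ)) → ‖1 - X‖ = 1 := by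
    intro X hX
    have hXe : (1:K) - X = 1 + (-X) := by ring
    rw [hXe, CayleyAux.norm_add_eq_left
      (by rw [norm_one, norm_neg]; exact lt_of_le_of_lt hX hρ1), norm_one]
  have honesub_ne : ∀ X : K, ‖X‖ ≤ (q:ℝ) ^ (-(1:ℤ)) → (1:K) - X ≠ 0 := by
    intro X hX h
    have := honesub X hX
    rw [h, norm_zero] at this
    norm_num at this
  have hdiff : ∀ X Y : K, ‖X‖ ≤ (q:ℝ) ^ (-(1:ℤ)) → ‖Y‖ ≤ (q:ℝ) ^ (-(1:ℤ)) →
      ‖cay X - cay Y‖ = ‖X - Y‖ := by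
    intro X Y hX hY
    have hX1 : (1:K) - X ≠ 0 := honesub_ne X hX
    have hY1 : (1:K) - Y ≠ 0 := honesub_ne Y hY
    have hid : cay X - cay Y = 2 * (X - Y) * ((1 - X) * (1 - Y))⁻¹ := by
      simp only [cay]
      field_simp
      ring
    rw [hid, norm_mul, norm_mul, norm_inv, norm_mul, honesub X hX, honesub Y hY, h2]
    simp
  have hmem : ∀ X ∈ Metric.closedBall (0:K) ((q:ℝ) ^ (-(1:ℤ))),
      cay X ∈ Metric.closedBall (1:K) ((q:ℝ) ^ (-(1:ℤ))) := by
    intro X hX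
    have hX' : ‖X‖ ≤ (q:ℝ) ^ (-(1:ℤ)) := by
      rwa [Metric.mem_closedBall, dist_zero_right] at hX
    have h0 : cay (0:K) = 1 := by simp [cay]
    have hd := hdiff X 0 hX' (by simp [hρ0.le])
    rw [h0, sub_zero] at hd
    rw [Metric.mem_closedBall, dist_eq_norm, hd]
    exact hX'
  have hcinv : ∀ c ∈ Metric.closedBall (1:K) ((q:ℝ) ^ (-(1:ℤ))),
      ‖(c - 1) * (c + 1)⁻¹‖ ≤ (q:ℝ) ^ (-(1:ℤ)) ∧ cay ((c - 1) * (c + 1)⁻¹) = c := by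
    intro c hc
    have hc1 : ‖c - 1‖ ≤ (q:ℝ) ^ (-(1:ℤ)) := by
      rwa [Metric.mem_closedBall, dist_eq_norm] at hc
    have hc2 : ‖c + 1‖ = 1 := by
      have hce : c + 1 = 2 + (c - 1) := by ring
      rw [hce, CayleyAux.norm_add_eq_left (by rw [h2]; exact lt_of_le_of_lt hc1 hρ1), h2]
    have hc2ne : c + 1 ≠ 0 := by
      intro h; rw [h, norm_zero] at hc2; norm_num at hc2
    have hnormc' : ‖(c - 1) * (c + 1)⁻¹‖ ≤ (q:ℝ) ^ (-(1:ℤ)) := by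
      rw [norm_mul, norm_inv, hc2]
      simpa using hc1
    refine ⟨hnormc', ?_⟩
    have h1c' : (1:K) - (c - 1) * (c + 1)⁻¹ ≠ 0 := honesub_ne _ hnormc'
    simp only [cay]
    have h11 : (1:K) + 1 ≠ 0 := by rw [one_add_one_eq_two]; exact h2ne
    field_simp
    ring_nf
    exact inv_mul_cancel_right₀ h2ne c
  have hkey : ∀ c ∈ Metric.closedBall (1:K) ((q:ℝ) ^ (-(1:ℤ))), ∀ r : ℝ, 0 ≤ r →
      r ≤ (q:ℝ) ^ (-(1:ℤ)) →
      cay ⁻¹' (Metric.closedBall c r) ∩ Metric.closedBall (0:K) ((q:ℝ) ^ (-(1:ℤ))) =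
        Metric.closedBall ((c - 1) * (c + 1)⁻¹) r := by
    intro c hc r hr0 hrρ
    obtain ⟨hc'ρ, hc'eq⟩ := hcinv c hc
    ext X
    simp only [Set.mem_inter_iff, Set.mem_preimage, Metric.mem_closedBall, dist_eq_norm,
      dist_zero_right, sub_zero]
    constructor
    · rintro ⟨h1, h2'⟩
      have hd := hdiff X _ h2' hc'ρ
      rw [hc'eq] at hd
      rw [← hd]
      exact h1
    · intro h1
      have hXρ : ‖X‖ ≤ (q:ℝ) ^ (-(1:ℤ)) := by
        have hXe : X = (X - (c - 1) * (c + 1)⁻¹) + (c - 1) * (c + 1)⁻¹ := by ring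
        rw [hXe]
        exact (IsUltrametricDist.norm_add_le_max _ _).trans (max_le (h1.trans hrρ) hc'ρ)
      refine ⟨?_, hXρ⟩
      have hd := hdiff X _ hXρ hc'ρ
      rw [hc'eq] at hd
      rw [hd]
      exact h1
  haveI : ProperSpace K := ProperSpace.of_nontriviallyNormedField_of_weaklyLocallyCompactSpace K
  have hcay_meas : Measurable (cay : K → K) := by
    have hce : (cay : K → K) = fun X => (1 + X) * (1 - X)⁻¹ := rfl
    rw [hce]
    exact (measurable_const.add measurable_id).mul ((measurable_const.sub measurable_id).inv)
  have hball_fin : ∀ (c : K) (r : ℝ), μ (Metric.closedBall c r) ≠ ⊤ :=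
    fun c r => (isCompact_closedBall c r).measure_lt_top.ne
  have hball_inv : ∀ (c : K) (r : ℝ), μ (Metric.closedBall c r) = μ (Metric.closedBall 0 r) := by
    intro c r
    have hpre : (fun x => c + x) ⁻¹' (Metric.closedBall c r) = Metric.closedBall 0 r := by
      ext x
      simp [Metric.mem_closedBall, dist_eq_norm, add_sub_cancel_left]
    rw [← hpre, measure_preimage_add]
  have hmap_apply : ∀ A : Set K, MeasurableSet A →
      Measure.map cay (μ.restrict (Metric.closedBall (0:K) ((q:ℝ) ^ (-(1:ℤ))))) A =
        μ (cay ⁻¹' A ∩ Metric.closedBall (0:K) ((q:ℝ) ^ (-(1:ℤ)))) := by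
    intro A hA
    rw [Measure.map_apply hcay_meas hA, Measure.restrict_apply (hcay_meas hA)]
  have hmain : μ = Measure.map cay (μ.restrict (Metric.closedBall (0:K) ((q:ℝ) ^ (-(1:ℤ))))) +
      μ.restrict (Metric.closedBall (1:K) ((q:ℝ) ^ (-(1:ℤ))))ᶜ := by
    refine MeasureTheory.Measure.ext_of_generateFrom_of_iUnion (CayleyAux.ballFam K (q:ℝ))
      (fun n => Metric.closedBall 0 ((q:ℝ) ^ (n:ℤ)))
      (CayleyAux.generateFrom_ballFam hqR) (CayleyAux.isPiSystem_ballFam hqR) ?_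
      (fun n => ⟨0, n, rfl⟩) (fun n => hball_fin _ _) ?_
    · ext x
      simp only [Set.mem_iUnion, Set.mem_univ, iff_true]
      obtain ⟨n, hn⟩ := exists_nat_gt ‖x‖
      refine ⟨n, ?_⟩
      rw [Metric.mem_closedBall, dist_zero_right]
      have h1 : ((n:ℝ)) < (q:ℝ) ^ (n:ℤ) := by
        rw [zpow_natCast]
        exact_mod_cast Nat.lt_pow_self (n := n) hq_one
      exact (hn.trans h1).le
    · rintro D ⟨c, m, rfl⟩
      rw [Measure.add_apply, hmap_apply _ measurableSet_closedBall,
        Measure.restrict_apply measurableSet_closedBall]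
      by_cases hint : (Metric.closedBall c ((q:ℝ) ^ m) ∩
          Metric.closedBall (1:K) ((q:ℝ) ^ (-(1:ℤ)))).Nonempty
      · obtain ⟨x, hx1, hx2⟩ := hint
        by_cases hr : (q:ℝ) ^ m ≤ (q:ℝ) ^ (-(1:ℤ))
        · have hDs : Metric.closedBall c ((q:ℝ) ^ m) ⊆
              Metric.closedBall (1:K) ((q:ℝ) ^ (-(1:ℤ))) :=
            CayleyAux.ball_subset_ball' hr hx1 hx2
          have hdisj : Metric.closedBall c ((q:ℝ) ^ m) ∩
              (Metric.closedBall (1:K) ((q:ℝ) ^ (-(1:ℤ))))ᶜ = ∅ := by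
            rw [Set.eq_empty_iff_forall_notMem]
            rintro y ⟨hy1, hy2⟩
            exact hy2 (hDs hy1)
          have hDeq : Metric.closedBall c ((q:ℝ) ^ m) = Metric.closedBall x ((q:ℝ) ^ m) :=
            CayleyAux.ball_eq_of_mem hx1
          rw [hdisj, measure_empty, add_zero, hDeq,
            hkey x hx2 _ (zpow_nonneg hq0.le m) hr, hball_inv x, hball_inv ((x - 1) * (x + 1)⁻¹)]
        · push_neg at hr
          have hsD : Metric.closedBall (1:K) ((q:ℝ) ^ (-(1:ℤ))) ⊆
              Metric.closedBall c ((q:ℝ) ^ m) :=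
            CayleyAux.ball_subset_ball' hr.le hx2 hx1
          have hPD : cay ⁻¹' (Metric.closedBall c ((q:ℝ) ^ m)) ∩
              Metric.closedBall (0:K) ((q:ℝ) ^ (-(1:ℤ))) =
              Metric.closedBall (0:K) ((q:ℝ) ^ (-(1:ℤ))) := by
            rw [Set.inter_eq_right]
            exact fun X hX => hsD (hmem X hX)
          have hcompl : Metric.closedBall c ((q:ℝ) ^ m) ∩
              (Metric.closedBall (1:K) ((q:ℝ) ^ (-(1:ℤ))))ᶜ =
              Metric.closedBall c ((q:ℝ) ^ m) \
                Metric.closedBall (1:K) ((q:ℝ) ^ (-(1:ℤ))) := (Set.diff_eq _ _).symm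
          rw [hPD, hcompl,
            measure_diff hsD measurableSet_closedBall.nullMeasurableSet (hball_fin _ _),
            hball_inv (1:K) ((q:ℝ) ^ (-(1:ℤ)))]
          exact (add_tsub_cancel_of_le
            ((hball_inv (1:K) ((q:ℝ) ^ (-(1:ℤ)))) ▸ measure_mono hsD)).symm
      · have h1 : cay ⁻¹' (Metric.closedBall c ((q:ℝ) ^ m)) ∩
            Metric.closedBall (0:K) ((q:ℝ) ^ (-(1:ℤ))) = ∅ := by
          rw [Set.eq_empty_iff_forall_notMem]
          rintro X ⟨hX1, hX2⟩
          exact hint ⟨cay X, hX1, hmem X hX2⟩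
        have h2' : Metric.closedBall c ((q:ℝ) ^ m) ∩
            (Metric.closedBall (1:K) ((q:ℝ) ^ (-(1:ℤ))))ᶜ =
            Metric.closedBall c ((q:ℝ) ^ m) := by
          rw [Set.inter_eq_left]
          intro y hy hys
          exact hint ⟨y, hy, hys⟩
        rw [h1, h2', measure_empty, zero_add]
  have hpart1 : Measure.map cay (μ.restrict (Metric.closedBall (0:K) ((q:ℝ) ^ (-(1:ℤ))))) =
      μ.restrict (Metric.closedBall (1:K) ((q:ℝ) ^ (-(1:ℤ)))) := by
    ext A hA
    have h1 : μ (A ∩ Metric.closedBall (1:K) ((q:ℝ) ^ (-(1:ℤ)))) =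
        Measure.map cay (μ.restrict (Metric.closedBall (0:K) ((q:ℝ) ^ (-(1:ℤ)))))
          (A ∩ Metric.closedBall (1:K) ((q:ℝ) ^ (-(1:ℤ)))) +
        μ ((A ∩ Metric.closedBall (1:K) ((q:ℝ) ^ (-(1:ℤ)))) ∩
          (Metric.closedBall (1:K) ((q:ℝ) ^ (-(1:ℤ))))ᶜ) := by
      have h0 := congrArg (fun ν : Measure K =>
        ν (A ∩ Metric.closedBall (1:K) ((q:ℝ) ^ (-(1:ℤ))))) hmain
      simpa [Measure.add_apply,
        Measure.restrict_apply (hA.inter measurableSet_closedBall)] using h0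
    have h2' : (A ∩ Metric.closedBall (1:K) ((q:ℝ) ^ (-(1:ℤ)))) ∩
        (Metric.closedBall (1:K) ((q:ℝ) ^ (-(1:ℤ))))ᶜ = ∅ := by
      rw [Set.inter_assoc, Set.inter_compl_self, Set.inter_empty]
    rw [h2', measure_empty, add_zero] at h1
    have h3 : cay ⁻¹' A ∩ Metric.closedBall (0:K) ((q:ℝ) ^ (-(1:ℤ))) =
        cay ⁻¹' (A ∩ Metric.closedBall (1:K) ((q:ℝ) ^ (-(1:ℤ)))) ∩
          Metric.closedBall (0:K) ((q:ℝ) ^ (-(1:ℤ))) := by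
      ext X
      constructor
      · rintro ⟨hX1, hX2⟩
        exact ⟨⟨hX1, hmem X hX2⟩, hX2⟩
      · rintro ⟨hX1, hX2⟩
        exact ⟨hX1.1, hX2⟩
    rw [hmap_apply A hA, h3, ← hmap_apply _ (hA.inter measurableSet_closedBall), ← h1,
      Measure.restrict_apply hA]
  have hdens : (μ.withDensity fun x => ENNReal.ofReal ‖x‖⁻¹).restrict
      (Metric.closedBall (1:K) ((q:ℝ) ^ (-(1:ℤ)))) =
      μ.restrict (Metric.closedBall (1:K) ((q:ℝ) ^ (-(1:ℤ)))) := by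
    rw [restrict_withDensity measurableSet_closedBall]
    have hae : (fun x : K => ENNReal.ofReal ‖x‖⁻¹)
        =ᵐ[μ.restrict (Metric.closedBall (1:K) ((q:ℝ) ^ (-(1:ℤ))))] fun _ => (1 : ENNReal) :=
      (ae_restrict_iff' measurableSet_closedBall).mpr
        (Filter.Eventually.of_forall fun x hx =>
          show ENNReal.ofReal ‖x‖⁻¹ = 1 by rw [hnorm_s x hx]; norm_num)
    rw [withDensity_congr_ae hae]
    exact withDensity_one
  have hmeasEq : (μ.withDensity fun x => ENNReal.ofReal ‖x‖⁻¹).restrict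
      {x : K | x - 1 ∈ pSet q 1} = Measure.map cay (μ.restrict (pSet q 1)) := by
    rw [hseq, hdens, ← hpart1, hPeq]
  constructor
  · rw [hmeasEq, hPeq]
  · intro f hf
    have hfm : AEStronglyMeasurable f (Measure.map cay (μ.restrict (pSet q 1))) := by
      rw [← hmeasEq]
      exact hf.aestronglyMeasurable
    calc ∫ x in {x : K | x - 1 ∈ pSet q 1}, f x
          ∂(μ.withDensity fun x => ENNReal.ofReal ‖x‖⁻¹)
        = ∫ y, f y ∂(Measure.map cay (μ.restrict (pSet q 1))) := by rw [hmeasEq]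
      _ = ∫ X in pSet q 1, f (cay X) ∂μ := integral_map hcay_meas.aemeasurable hfm
end
end

section
/- Let Ψ : K → ℂ^× be a nontrivial locally constant additive character of depth −1 (trivial on O, nontrivial on ϖ^{−1}O). Then in the principal-value integral Σ_{n ∈ ℤ} ∫_{{x : ord(x) = n}} Ψ(x)·|x|^{1/2}·sgn_ϖ(x) d^×x, the shell integral ∫_{{x : ord(x) = n}} Ψ(x)|x|^{1/2}sgn_ϖ(x) d^×x vanishes for every n ≠ −1, and the total sum equals the normalized Gauss sum G_ϖ(Ψ). (This is the evaluation Γ(ν^{1/2}·sgn_ϖ) = sgn_ϖ(−1)^{d(Φ)+1}·G_ϖ(Φ) of the Sally–Taibleson Γ-factor.) -/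
open MeasureTheory
open scoped Classical

noncomputable section

variable {K : Type}

open Finset in
lemma sum_psi_eq_zero' {F : Type*} [Fintype F] [AddGroup F] (ψ : F → ℂ)
    (hadd : ∀ u v : F, ψ (u + v) = ψ u * ψ v) (hnt : ∃ u : F, ψ u ≠ 1) :
    ∑ u : F, ψ u = 0 := by
  obtain ⟨v, hv⟩ := hnt
  have h1 : (∑ u : F, ψ u) * ψ v = ∑ u : F, ψ u := by
    rw [Finset.sum_mul]
    exact Fintype.sum_equiv (Equiv.addRight v) _ _ (fun x => (hadd x v).symm)
  have h2 : (∑ u : F, ψ u) * (ψ v - 1) = 0 := by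
    rw [mul_sub, mul_one, h1, sub_self]
  rcases mul_eq_zero.mp h2 with h | h
  · exact h
  · exact absurd (sub_eq_zero.mp h) hv

open Finset in
lemma gauss_star' {F : Type*} [Field F] [Fintype F] [DecidableEq F] (hF : ringChar F ≠ 2)
    (ψ : F → ℂ) (hadd : ∀ u v : F, ψ (u + v) = ψ u * ψ v) (hnt : ∃ u : F, ψ u ≠ 1) :
    ∑ X : F, ψ (-X ^ 2) =
      (quadraticChar F (-1) : ℂ) * ∑ u : F, (quadraticChar F u : ℂ) * ψ u := by
  have hfib : ∑ X : F, ψ (-X ^ 2) = ∑ u : F, ∑ X ∈ univ.filter (fun X => X ^ 2 = u), ψ (-u) := by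
    rw [← Finset.sum_fiberwise univ (fun X : F => X ^ 2) (fun X => ψ (-X ^ 2))]
    refine Finset.sum_congr rfl fun u _ => Finset.sum_congr rfl fun X hX => ?_
    rw [(Finset.mem_filter.mp hX).2]
  have hcard : ∀ u : F, ((univ.filter (fun X : F => X ^ 2 = u)).card : ℂ)
      = (quadraticChar F u : ℂ) + 1 := by
    intro u
    have := quadraticChar_card_sqrts hF u
    rw [Set.toFinset_setOf] at this
    exact_mod_cast congrArg (Int.cast : ℤ → ℂ) this
  have hneg : ∑ u : F, ψ (-u) = 0 := by
    rw [Fintype.sum_equiv (Equiv.neg F) (fun u => ψ (-u)) ψ (fun x => rfl)]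
    exact sum_psi_eq_zero' ψ hadd hnt
  calc ∑ X : F, ψ (-X ^ 2)
      = ∑ u : F, ((quadraticChar F u : ℂ) + 1) * ψ (-u) := by
        rw [hfib]; refine Finset.sum_congr rfl fun u _ => ?_
        rw [Finset.sum_const, ← hcard u]; simp [mul_comm]
    _ = ∑ u : F, (quadraticChar F u : ℂ) * ψ (-u) := by
        simp only [add_mul, one_mul]
        rw [Finset.sum_add_distrib, hneg, add_zero]
    _ = ∑ u : F, (quadraticChar F (-u) : ℂ) * ψ u := by
        exact Fintype.sum_equiv (Equiv.neg F)
          (fun u => (quadraticChar F u : ℂ) * ψ (-u))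
          (fun u => (quadraticChar F (-u) : ℂ) * ψ u) (fun x => by simp)
    _ = (quadraticChar F (-1) : ℂ) * ∑ u : F, (quadraticChar F u : ℂ) * ψ u := by
        rw [Finset.mul_sum]
        refine Finset.sum_congr rfl fun u _ => ?_
        have : quadraticChar F (-u) = quadraticChar F (-1) * quadraticChar F u := by
          rw [← map_mul]; ring_nf
        rw [this]; push_cast; ring

/-- The valuation ring O as a subring. -/
def Oring (K : Type) [NormedField K] [IsUltrametricDist K] : Subring K where
  carrier := {x | ‖x‖ ≤ 1}
  mul_mem' {a b} ha hb := by
    simp only [Set.mem_setOf_eq] at *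
    calc ‖a * b‖ = ‖a‖ * ‖b‖ := norm_mul a b
    _ ≤ 1 := mul_le_one₀ ha (norm_nonneg b) hb
  one_mem' := by simp
  add_mem' {a b} ha hb := le_trans (IsUltrametricDist.norm_add_le_max a b) (max_le ha hb)
  zero_mem' := by simp
  neg_mem' {a} ha := by simpa using ha

/-- The maximal ideal of O. -/
def mIdeal (K : Type) [NormedField K] [IsUltrametricDist K] : Ideal (Oring K) where
  carrier := {x | ‖(x : K)‖ < 1}
  add_mem' {a b} ha hb := lt_of_le_of_lt (IsUltrametricDist.norm_add_le_max (a : K) b)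
    (max_lt ha hb)
  zero_mem' := by simp
  smul_mem' c x hx := by
    simp only [Set.mem_setOf_eq, smul_eq_mul] at *
    calc ‖((c * x : Oring K) : K)‖ = ‖(c : K)‖ * ‖(x : K)‖ := norm_mul _ _
    _ ≤ 1 * ‖(x : K)‖ := by gcongr; exact c.2
    _ < 1 := by simpa using hx

instance (K : Type) [NormedField K] [IsUltrametricDist K] : (mIdeal K).IsMaximal := by
  rw [Ideal.isMaximal_iff]
  constructor
  · simp [mIdeal]
  · rintro J x hmJ hxm hxJ
    have hx1 : ‖(x : K)‖ = 1 := le_antisymm x.2 (not_lt.mp hxm)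
    have hx0 : (x : K) ≠ 0 := by
      intro h; rw [h] at hx1; simp at hx1
    have hinv : ‖(x : K)⁻¹‖ ≤ 1 := by rw [norm_inv, hx1]; norm_num
    have : (⟨(x : K)⁻¹, hinv⟩ : Oring K) * x = 1 := by
      ext; simp [inv_mul_cancel₀ hx0]
    rw [← this]
    exact J.mul_mem_left _ hxJ

/-- The residue field. -/
abbrev resF (K : Type) [NormedField K] [IsUltrametricDist K] : Type := Oring K ⧸ mIdeal K

noncomputable instance (K : Type) [NormedField K] [IsUltrametricDist K] : Field (resF K) :=
  Ideal.Quotient.field (mIdeal K)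

/-- reduction map -/
def redK (K : Type) [NormedField K] [IsUltrametricDist K] : K → resF K := fun x =>
  if h : ‖x‖ ≤ 1 then Ideal.Quotient.mk (mIdeal K) ⟨x, h⟩ else 0

section redlemmas

variable [NormedField K] [IsUltrametricDist K]

lemma redK_def {x : K} (h : ‖x‖ ≤ 1) : redK K x = Ideal.Quotient.mk (mIdeal K) ⟨x, h⟩ :=
  dif_pos h

lemma redK_eq_iff {a b : K} (ha : ‖a‖ ≤ 1) (hb : ‖b‖ ≤ 1) :
    redK K a = redK K b ↔ ‖a - b‖ < 1 := by
  rw [redK_def ha, redK_def hb, Ideal.Quotient.eq]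
  rfl

lemma redK_zero : redK K 0 = 0 := by
  rw [redK_def (by simp)]
  exact RingHom.map_zero (Ideal.Quotient.mk (mIdeal K))

lemma redK_eq_zero_iff {a : K} (ha : ‖a‖ ≤ 1) : redK K a = 0 ↔ ‖a‖ < 1 := by
  rw [← redK_zero (K := K), redK_eq_iff ha (by simp), sub_zero]

lemma redK_add {a b : K} (ha : ‖a‖ ≤ 1) (hb : ‖b‖ ≤ 1) :
    redK K (a + b) = redK K a + redK K b := by
  have hab : ‖a + b‖ ≤ 1 := le_trans (IsUltrametricDist.norm_add_le_max a b) (max_le ha hb)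
  rw [redK_def ha, redK_def hb, redK_def hab,
    show (⟨a + b, hab⟩ : Oring K) = ⟨a, ha⟩ + ⟨b, hb⟩ from rfl, RingHom.map_add]

lemma redK_mul {a b : K} (ha : ‖a‖ ≤ 1) (hb : ‖b‖ ≤ 1) :
    redK K (a * b) = redK K a * redK K b := by
  have hab : ‖a * b‖ ≤ 1 := by
    calc ‖a * b‖ = ‖a‖ * ‖b‖ := norm_mul a b
    _ ≤ 1 := mul_le_one₀ ha (norm_nonneg b) hb
  rw [redK_def ha, redK_def hb, redK_def hab,
    show (⟨a * b, hab⟩ : Oring K) = ⟨a, ha⟩ * ⟨b, hb⟩ from rfl, RingHom.map_mul]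

lemma redK_neg {a : K} (ha : ‖a‖ ≤ 1) : redK K (-a) = - redK K a := by
  have h : ‖-a‖ ≤ 1 := by simpa using ha
  rw [redK_def ha, redK_def h,
    show (⟨-a, h⟩ : Oring K) = -⟨a, ha⟩ from rfl, RingHom.map_neg]

lemma redK_one : redK K 1 = 1 := by
  rw [redK_def (by simp)]
  exact RingHom.map_one _

lemma redK_natCast (n : ℕ) : redK K (n : K) = (n : resF K) := by
  induction n with
  | zero => simpa using redK_zero
  | succ m ih =>
    push_cast
    rw [redK_add (IsUltrametricDist.norm_natCast_le_one K m) (by simp), ih, redK_one]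

lemma redK_surj (u : resF K) : ∃ a : K, ‖a‖ ≤ 1 ∧ redK K a = u := by
  obtain ⟨⟨a, ha⟩, rfl⟩ := Ideal.Quotient.mk_surjective u
  exact ⟨a, ha, redK_def ha⟩

end redlemmas

section etaKlemmas

variable [NormedField K] [IsUltrametricDist K]

lemma norm_eq_of_norm_sub_lt {x y : K} (h : ‖x - y‖ < ‖y‖) : ‖x‖ = ‖y‖ := by
  have h1 : ‖x‖ ≤ ‖y‖ := by
    have h2 := IsUltrametricDist.norm_add_le_max (x - y) y
    rw [sub_add_cancel] at h2
    exact h2.trans (max_le h.le le_rfl)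
  by_contra hne
  have hlt : ‖x‖ < ‖y‖ := lt_of_le_of_ne h1 hne
  have h3 := IsUltrametricDist.norm_add_le_max (y - x) x
  rw [sub_add_cancel] at h3
  rw [norm_sub_rev] at h
  exact absurd h3 (not_le.mpr (max_lt h hlt))

lemma etaK_congr {u v : K} (h : ‖u - v‖ < 1) : etaK u = etaK v := by
  unfold etaK
  congr 1
  apply propext
  constructor
  · rintro ⟨y, hy⟩
    refine ⟨y, ?_⟩
    have : y * y - v = (y * y - u) + (u - v) := by ring
    rw [this]
    exact lt_of_le_of_lt (IsUltrametricDist.norm_add_le_max _ _) (max_lt hy h)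
  · rintro ⟨y, hy⟩
    refine ⟨y, ?_⟩
    have heq : y * y - u = (y * y - v) + (v - u) := by ring
    rw [heq]
    exact lt_of_le_of_lt (IsUltrametricDist.norm_add_le_max _ _)
      (max_lt hy (by rwa [norm_sub_rev] at h))

lemma etaK_cases (u : K) : etaK u = 1 ∨ etaK u = -1 := by
  unfold etaK; split <;> simp

lemma etaK_eq_quadChar [Fintype (resF K)] {a : K} (ha : ‖a‖ = 1) :
    etaK a = ((quadraticChar (resF K) (redK K a) : ℤ) : ℂ) := by
  have ha1 : ‖a‖ ≤ 1 := ha.le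
  have h0 : redK K a ≠ 0 := by
    rw [Ne, redK_eq_zero_iff ha1, ha]
    simp
  have hiff : (∃ y : K, ‖y * y - a‖ < 1) ↔ IsSquare (redK K a) := by
    constructor
    · rintro ⟨y, hy⟩
      have hy1 : ‖y‖ ≤ 1 := by
        by_contra hgt
        push_neg at hgt
        have hyy : (1:ℝ) < ‖y * y‖ := by rw [norm_mul]; nlinarith
        have heq : ‖y * y - a‖ = ‖y * y‖ := by
          apply norm_eq_of_norm_sub_lt
          have : y * y - a - (y * y) = -a := by ring
          rw [this, norm_neg, ha]
          exact hyy
        rw [heq] at hy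
        linarith
      have hyy1 : ‖y * y‖ ≤ 1 := by
        rw [norm_mul]
        exact mul_le_one₀ hy1 (norm_nonneg y) hy1
      refine ⟨redK K y, ?_⟩
      rw [← redK_mul hy1 hy1]
      exact (redK_eq_iff ha1 hyy1).mpr (by rwa [norm_sub_rev] at hy)
    · rintro ⟨r, hr⟩
      obtain ⟨y, hy1, rfl⟩ := redK_surj r
      have hyy1 : ‖y * y‖ ≤ 1 := by
        rw [norm_mul]
        exact mul_le_one₀ hy1 (norm_nonneg y) hy1
      have : redK K (y * y) = redK K a := by rw [redK_mul hy1 hy1, ← hr]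
      exact ⟨y, (redK_eq_iff hyy1 ha1).mp this⟩
  unfold etaK
  by_cases h : IsSquare (redK K a)
  · rw [if_pos (hiff.mpr h), (quadraticChar_one_iff_isSquare h0).mpr h]
    norm_num
  · rw [if_neg (fun hc => h (hiff.mp hc)), quadraticChar_neg_one_iff_not_isSquare.mpr h]
    norm_num

end etaKlemmas

section measures

variable [NontriviallyNormedField K] [IsUltrametricDist K] [MeasurableSpace K] [BorelSpace K]

instance : MeasurableAdd K :=
  ⟨fun c => (continuous_add_left c).measurable, fun c => (continuous_add_right c).measurable⟩

/-- closed ball around c -/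
def Cset (q : ℕ) (c : K) (j : ℤ) : Set K := {x : K | ‖x - c‖ ≤ (q : ℝ) ^ (-j)}

lemma pSet_measurable (q : ℕ) (j : ℤ) : MeasurableSet (pSet (K := K) q j) :=
  (isClosed_le continuous_norm continuous_const).measurableSet

lemma Cset_measurable (q : ℕ) (c : K) (j : ℤ) : MeasurableSet (Cset (K := K) q c j) :=
  (isClosed_le ((continuous_id.sub continuous_const).norm) continuous_const).measurableSet

lemma Cset_eq_image (q : ℕ) (c : K) (j : ℤ) :
    Cset (K := K) q c j = (fun y => c + y) '' pSet q j := by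
  ext x
  constructor
  · intro hx
    exact ⟨x - c, hx, by ring⟩
  · rintro ⟨y, hy, rfl⟩
    show ‖c + y - c‖ ≤ _
    rw [add_sub_cancel_left]
    exact hy

lemma image_add_eq_preimage (c : K) (s : Set K) :
    (fun y => c + y) '' s = (fun x => -c + x) ⁻¹' s := by
  ext x
  constructor
  · rintro ⟨y, hy, rfl⟩
    simpa [neg_add_cancel_left] using hy
  · intro h
    exact ⟨-c + x, h, by simp [add_neg_cancel_left]⟩

lemma measure_image_add (μ : Measure K) [μ.IsAddHaarMeasure] (c : K) (s : Set K) :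
    μ ((fun y => c + y) '' s) = μ s := by
  rw [image_add_eq_preimage, measure_preimage_add]

lemma setIntegral_image_add (μ : Measure K) [μ.IsAddHaarMeasure] (c : K) (s : Set K)
    (g : K → ℂ) :
    ∫ x in (fun y => c + y) '' s, g x ∂μ = ∫ y in s, g (c + y) ∂μ :=
  (measurePreserving_add_left μ c).setIntegral_image_emb
    ((Homeomorph.addLeft c).toMeasurableEquiv.measurableEmbedding) g s

end measures

/-- evaluation of the Γ-factor `Γ(ν^{1/2} sgn_ϖ)`: all shells other than
the shell `ord x = -1` contribute `0`, and the principal-value integral equals the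
normalized Gauss sum. -/
theorem gamma_factor_evaluation
    [NontriviallyNormedField K] [IsUltrametricDist K]
    [CompleteSpace K] [LocallyCompactSpace K] [MeasurableSpace K] [BorelSpace K]
    (q : ℕ) (hq_odd : Odd q) (hq_one : 1 < q)
    (hfin : ∃ R : Finset K, IsResidueSystem R ∧ R.card = q)
    (ord : K → ℤ) (hord : ∀ x : K, x ≠ 0 → ‖x‖ = (q : ℝ) ^ (-ord x))
    (ϖ : K) (hϖ0 : ϖ ≠ 0) (hϖ1 : ord ϖ = 1)
    (μ : Measure K) [μ.IsAddHaarMeasure] (hμO : μ {x : K | ‖x‖ ≤ 1} = 1)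
    (Ψ : K → ℂ) (hΨadd : ∀ x y : K, Ψ (x + y) = Ψ x * Ψ y)
    (hΨ1 : ∀ x : K, ‖x‖ ≤ 1 → Ψ x = 1)
    (hΨ2 : ∃ x : K, x ∈ pSet q (-1) ∧ Ψ x ≠ 1) :
    (∀ n : ℤ, n ≠ -1 →
        ∫ x in {x : K | x ≠ 0 ∧ ord x = n},
          Ψ x * nuHalf x * sgnP ord ϖ x * (‖x‖ : ℂ)⁻¹ ∂μ = 0) ∧
    ∀ R : Finset K, IsResidueSystem R →
      (∑' n : ℤ, ∫ x in {x : K | x ≠ 0 ∧ ord x = n},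
          Ψ x * nuHalf x * sgnP ord ϖ x * (‖x‖ : ℂ)⁻¹ ∂μ) =
        gaussSumK q Ψ ϖ (-1) R := by
  classical
  have hqnat : 0 < q := lt_trans Nat.zero_lt_one hq_one
  have hq1R : (1:ℝ) < (q:ℝ) := by exact_mod_cast hq_one
  have hq0R : (0:ℝ) < (q:ℝ) := lt_trans one_pos hq1R
  have hqne : (q:ℝ) ≠ 0 := ne_of_gt hq0R
  have hqne1 : (q:ℝ) ≠ 1 := ne_of_gt hq1R
  have hqinvlt : (q:ℝ)^(-1:ℤ) < 1 := by
    have := (zpow_lt_zpow_iff_right₀ hq1R (m := -1) (n := 0)).mpr (by omega)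
    simpa using this
  obtain ⟨R₀, hR₀, hR₀card⟩ := hfin
  -- uniqueness of representatives
  have hRinj : ∀ (R : Finset K), IsResidueSystem R → ∀ a ∈ R, ∀ b ∈ R, ‖a - b‖ < 1 → a = b := by
    intro R hR a ha b hb hab
    obtain ⟨c, -, hu⟩ := hR.2 a (hR.1 a ha)
    have h1 := hu a ⟨ha, by simp⟩
    have h2 := hu b ⟨hb, hab⟩
    rw [h1, h2]
  have hRsur : ∀ (R : Finset K), IsResidueSystem R → ∀ u : resF K, ∃ a ∈ R, redK K a = u := by
    intro R hR u
    obtain ⟨y, hy1, hy2⟩ := redK_surj u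
    obtain ⟨c, ⟨hcR, hcy⟩, -⟩ := hR.2 y hy1
    refine ⟨c, hcR, ?_⟩
    rw [← hy2]
    exact (redK_eq_iff (hR.1 c hcR) hy1).mpr (by rwa [norm_sub_rev] at hcy)
  have hsurj0 : Function.Surjective (fun a : {x // x ∈ R₀} => redK K (a : K)) := by
    intro u
    obtain ⟨a, ha, haeq⟩ := hRsur R₀ hR₀ u
    exact ⟨⟨a, ha⟩, haeq⟩
  letI : Fintype (resF K) := Fintype.ofSurjective _ hsurj0
  have hinj0 : Function.Injective (fun a : {x // x ∈ R₀} => redK K (a : K)) := by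
    rintro ⟨a, ha⟩ ⟨b, hb⟩ hab
    have h1 := (redK_eq_iff (hR₀.1 a ha) (hR₀.1 b hb)).mp hab
    exact Subtype.ext (hRinj R₀ hR₀ a ha b hb h1)
  have hcardk : Fintype.card (resF K) = q := by
    rw [← Fintype.card_of_bijective ⟨hinj0, hsurj0⟩, Fintype.card_coe, hR₀card]
  have hchar2 : ringChar (resF K) ≠ 2 := by
    intro h2
    haveI : CharP (resF K) 2 := h2 ▸ ringChar.charP (resF K)
    obtain ⟨n, -, hcard⟩ := FiniteField.card (resF K) 2
    rw [hcardk] at hcard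
    have heven : Even q := hcard ▸ ((Nat.even_pow).mpr ⟨even_two, n.pos.ne'⟩)
    exact (Nat.not_even_iff_odd.mpr hq_odd) heven
  -- transfer of sums to the residue field
  have htransfer : ∀ (R : Finset K), IsResidueSystem R → ∀ F : resF K → ℂ,
      ∑ a ∈ R, F (redK K a) = ∑ u : resF K, F u := by
    intro R hR F
    apply Finset.sum_bij (fun a _ => redK K a)
    · intro a ha; exact Finset.mem_univ _
    · intro a ha b hb hab
      exact hRinj R hR a ha b hb ((redK_eq_iff (hR.1 a ha) (hR.1 b hb)).mp hab)
    · intro u _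
      obtain ⟨a, ha, haeq⟩ := hRsur R hR u
      exact ⟨a, ha, haeq⟩
    · intro a ha; rfl
  have htransferU : ∀ (R : Finset K), IsResidueSystem R → ∀ F : resF K → ℂ,
      ∑ a ∈ R.filter (fun a => ‖a‖ = 1), F (redK K a)
        = ∑ u ∈ Finset.univ.filter (fun u : resF K => u ≠ 0), F u := by
    intro R hR F
    apply Finset.sum_bij (fun a _ => redK K a)
    · intro a ha
      obtain ⟨haR, ha1⟩ := Finset.mem_filter.mp ha
      refine Finset.mem_filter.mpr ⟨Finset.mem_univ _, ?_⟩
      rw [Ne, redK_eq_zero_iff (hR.1 a haR), ha1]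
      simp
    · intro a ha b hb hab
      exact hRinj R hR a (Finset.mem_filter.mp ha).1 b (Finset.mem_filter.mp hb).1
        ((redK_eq_iff (hR.1 a (Finset.mem_filter.mp ha).1)
          (hR.1 b (Finset.mem_filter.mp hb).1)).mp hab)
    · intro u hu
      have hu0 : u ≠ 0 := (Finset.mem_filter.mp hu).2
      obtain ⟨a, ha, haeq⟩ := hRsur R hR u
      have ha1 : ‖a‖ = 1 := by
        rcases lt_or_eq_of_le (hR.1 a ha) with h | h
        · exfalso
          apply hu0
          rw [← haeq, redK_eq_zero_iff (hR.1 a ha)]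
          exact h
        · exact h
      exact ⟨a, Finset.mem_filter.mpr ⟨ha, ha1⟩, haeq⟩
    · intro a ha; rfl
  -- norms and valuations
  have hnormϖ : ‖ϖ‖ = (q:ℝ)^(-1:ℤ) := by rw [hord ϖ hϖ0, hϖ1]
  have hϖpow : ∀ j : ℤ, ‖ϖ ^ j‖ = (q:ℝ)^(-j) := by
    intro j
    rw [norm_zpow, hnormϖ, ← zpow_mul]
    congr 1
    ring
  have hordeq : ∀ {x : K} {n : ℤ}, x ≠ 0 → ‖x‖ = (q:ℝ)^(-n) → ord x = n := by
    intro x n hx h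
    rw [hord x hx] at h
    have h2 := zpow_right_injective₀ hq0R hqne1 h
    omega
  have hlt_iff : ∀ (x : K) (j : ℤ), ‖x‖ < (q:ℝ)^(-j) ↔ ‖x‖ ≤ (q:ℝ)^(-(j+1)) := by
    intro x j
    rcases eq_or_ne x 0 with rfl | hx
    · simp only [norm_zero]
      constructor <;> intro <;> positivity
    · rw [hord x hx, zpow_lt_zpow_iff_right₀ hq1R, zpow_le_zpow_iff_right₀ hq1R]
      omega
  have hlt1 : ∀ z : K, ‖z‖ < 1 ↔ ‖z‖ ≤ (q:ℝ)^(-1:ℤ) := by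
    intro z
    have h := hlt_iff z 0
    norm_num at h ⊢
    exact h
  -- basic facts about Ψ
  have hΨ0 : Ψ 0 = 1 := hΨ1 0 (by simp)
  have hΨeq : ∀ x y : K, ‖x - y‖ ≤ 1 → Ψ x = Ψ y := by
    intro x y h
    have h2 := hΨadd y (x - y)
    rw [hΨ1 _ h, mul_one] at h2
    rw [← h2]
    congr 1
    ring
  have hqK : ‖(q : K)‖ < 1 := by
    have h1 : ((q:ℕ) : resF K) = 0 := by
      have h2 := FiniteField.cast_card_eq_zero (resF K)
      rwa [hcardk] at h2
    have h2 : redK K ((q:ℕ) : K) = 0 := by rw [redK_natCast, h1]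
    exact (redK_eq_zero_iff (IsUltrametricDist.norm_natCast_le_one K q)).mp h2
  have hΨnsmul : ∀ (m : ℕ) (y : K), Ψ ((m : K) * y) = Ψ y ^ m := by
    intro m
    induction m with
    | zero => intro y; simpa using hΨ0
    | succ k ih =>
      intro y
      have h : ((k:K) + 1) * y = (k:K) * y + y := by ring
      rw [Nat.cast_succ, h, hΨadd, ih, pow_succ]
  have habsΨ : ∀ x : K, ‖Ψ x‖ = 1 := by
    intro x
    obtain ⟨m, hm⟩ : ∃ m : ℕ, ‖(q:K)^m * x‖ ≤ 1 := by
      rcases le_or_gt ‖x‖ 1 with h | h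
      · exact ⟨0, by simpa⟩
      · obtain ⟨m, hm⟩ := exists_pow_lt_of_lt_one (x := ‖x‖⁻¹) (by positivity) hqK
        refine ⟨m, ?_⟩
        rw [norm_mul, norm_pow]
        have h2 : ‖(q:K)‖ ^ m * ‖x‖ < ‖x‖⁻¹ * ‖x‖ :=
          mul_lt_mul_of_pos_right hm (by positivity)
        rw [inv_mul_cancel₀ (by positivity)] at h2
        exact h2.le
    have h1 : Ψ x ^ (q ^ m) = 1 := by
      have h2 := hΨnsmul (q ^ m) x
      push_cast at h2
      rw [← h2]
      exact hΨ1 _ hm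
    have h3 : ‖Ψ x‖ ^ (q ^ m) = 1 := by rw [← norm_pow, h1, norm_one]
    have hqm : q ^ m ≠ 0 := pow_ne_zero m (by omega)
    rcases lt_trichotomy ‖Ψ x‖ 1 with h | h | h
    · exfalso
      have := pow_lt_one₀ (norm_nonneg _) h hqm
      rw [h3] at this
      exact lt_irrefl _ this
    · exact h
    · exfalso
      have := one_lt_pow₀ h hqm
      rw [h3] at this
      exact lt_irrefl _ this
  have hcontΨ : Continuous Ψ := by
    rw [continuous_iff_continuousAt]
    intro x
    have h : ∀ᶠ y in nhds x, Ψ y = Ψ x := by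
      filter_upwards [Metric.ball_mem_nhds x one_pos] with y hy
      exact hΨeq y x (by rw [← dist_eq_norm]; exact (Metric.mem_ball.mp hy).le)
    exact continuousAt_const.congr (by filter_upwards [h] with y hy; exact hy.symm)
  -- measures of balls
  have hμB : ∀ j : ℤ, μ (pSet (K := K) q j) = ENNReal.ofReal ((q:ℝ)^(-j)) := by
    have hcover : ∀ j : ℤ, (pSet (K := K) q j) = ⋃ a ∈ R₀, Cset q (ϖ^j * a) (j+1) := by
      intro j
      ext x
      simp only [Set.mem_iUnion, exists_prop]
      constructor
      · intro hx
        have hx' : ‖x‖ ≤ (q:ℝ)^(-j) := hx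
        have hy1 : ‖ϖ^(-j) * x‖ ≤ 1 := by
          rw [norm_mul, hϖpow]
          calc (q:ℝ)^(-(-j)) * ‖x‖ ≤ (q:ℝ)^(-(-j)) * (q:ℝ)^(-j) :=
                mul_le_mul_of_nonneg_left hx' (by positivity)
          _ = 1 := by rw [← zpow_add₀ hqne]; norm_num
        obtain ⟨a, ⟨haR, hya⟩, -⟩ := hR₀.2 _ hy1
        refine ⟨a, haR, ?_⟩
        show ‖x - ϖ^j * a‖ ≤ (q:ℝ)^(-(j+1))
        have hϖj : ϖ^j * ϖ^(-j) = 1 := by rw [← zpow_add₀ hϖ0]; simp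
        have hxa : x - ϖ^j * a = ϖ^j * (ϖ^(-j) * x - a) := by
          calc x - ϖ^j * a = ϖ^j * ϖ^(-j) * x - ϖ^j * a := by rw [hϖj]; ring
          _ = _ := by ring
        rw [hxa, norm_mul, hϖpow]
        have h2 : ‖ϖ^(-j) * x - a‖ ≤ (q:ℝ)^(-1:ℤ) := (hlt1 _).mp hya
        calc (q:ℝ)^(-j) * ‖ϖ^(-j)*x - a‖ ≤ (q:ℝ)^(-j) * (q:ℝ)^(-1:ℤ) :=
              mul_le_mul_of_nonneg_left h2 (by positivity)
        _ = (q:ℝ)^(-(j+1)) := by rw [← zpow_add₀ hqne]; congr 1; ring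
      · rintro ⟨a, haR, hxa⟩
        have hxa' : ‖x - ϖ^j * a‖ ≤ (q:ℝ)^(-(j+1)) := hxa
        have hca : ‖ϖ^j * a‖ ≤ (q:ℝ)^(-j) := by
          rw [norm_mul, hϖpow]
          calc (q:ℝ)^(-j) * ‖a‖ ≤ (q:ℝ)^(-j) * 1 :=
                mul_le_mul_of_nonneg_left (hR₀.1 a haR) (by positivity)
          _ = _ := mul_one _
        show ‖x‖ ≤ (q:ℝ)^(-j)
        have hxrw : x = (x - ϖ^j * a) + ϖ^j * a := by ring
        rw [hxrw]
        refine le_trans (IsUltrametricDist.norm_add_le_max _ _) (max_le ?_ hca)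
        refine le_trans hxa' ?_
        exact (zpow_le_zpow_iff_right₀ hq1R).mpr (by omega)
    have hdisj : ∀ j : ℤ, (↑R₀ : Set K).PairwiseDisjoint
        (fun a => Cset q (ϖ^j * a) (j+1)) := by
      intro j a ha b hb hab
      rw [Function.onFun, Set.disjoint_left]
      intro x hxa hxb
      have hxa' : ‖x - ϖ^j*a‖ ≤ (q:ℝ)^(-(j+1)) := hxa
      have hxb' : ‖x - ϖ^j*b‖ ≤ (q:ℝ)^(-(j+1)) := hxb
      have h1 : ‖ϖ^j*a - ϖ^j*b‖ ≤ (q:ℝ)^(-(j+1)) := by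
        have hrw : ϖ^j*a - ϖ^j*b = -(x - ϖ^j*a) + (x - ϖ^j*b) := by ring
        rw [hrw]
        exact le_trans (IsUltrametricDist.norm_add_le_max _ _)
          (max_le (by rwa [norm_neg]) hxb')
      have h2 : ‖a - b‖ ≤ (q:ℝ)^(-1:ℤ) := by
        rw [show ϖ^j*a - ϖ^j*b = ϖ^j*(a-b) from by ring, norm_mul, hϖpow] at h1
        have h3 : (q:ℝ)^(-(j+1)) = (q:ℝ)^(-j) * (q:ℝ)^(-1:ℤ) := by
          rw [← zpow_add₀ hqne]; congr 1; ring
        rw [h3] at h1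
        exact le_of_mul_le_mul_left h1 (by positivity)
      exact hab (hRinj R₀ hR₀ a (Finset.mem_coe.mp ha) b (Finset.mem_coe.mp hb)
        (lt_of_le_of_lt h2 hqinvlt))
    have hμstep : ∀ j : ℤ, μ (pSet (K := K) q j) = q * μ (pSet (K := K) q (j+1)) := by
      intro j
      rw [hcover j, measure_biUnion_finset (hdisj j) (fun a _ => Cset_measurable q _ _)]
      have hc : ∀ a ∈ R₀, μ (Cset q (ϖ^j * a) (j+1)) = μ (pSet (K := K) q (j+1)) := by
        intro a _
        rw [Cset_eq_image, measure_image_add]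
      rw [Finset.sum_congr rfl hc, Finset.sum_const, hR₀card, nsmul_eq_mul]
    have hqinv : ENNReal.ofReal ((q:ℝ)⁻¹) = (q:ENNReal)⁻¹ := by
      rw [ENNReal.ofReal_inv_of_pos hq0R, ENNReal.ofReal_natCast]
    have hqcast : (q:ENNReal) = ENNReal.ofReal (q:ℝ) := (ENNReal.ofReal_natCast q).symm
    have hqE0 : (q:ENNReal) ≠ 0 := by
      simp only [Ne, Nat.cast_eq_zero]
      omega
    have hqET : (q:ENNReal) ≠ ⊤ := ENNReal.natCast_ne_top q
    intro j
    induction j using Int.induction_on with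
    | zero =>
      have h0 : pSet (K := K) q 0 = {x : K | ‖x‖ ≤ 1} := by
        ext x
        show ‖x‖ ≤ (q:ℝ)^(-(0:ℤ)) ↔ _
        norm_num
      rw [h0, hμO]
      norm_num
    | succ n ih =>
      have h := hμstep n
      rw [ih] at h
      have h4 : μ (pSet (K := K) q ((n:ℤ)+1))
          = (q:ENNReal)⁻¹ * ENNReal.ofReal ((q:ℝ)^(-(n:ℤ))) := by
        rw [h, ← mul_assoc, ENNReal.inv_mul_cancel hqE0 hqET, one_mul]
      rw [h4, ← hqinv, ← ENNReal.ofReal_mul (by positivity)]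
      congr 1
      rw [← zpow_neg_one, ← zpow_add₀ hqne]
      congr 1
      ring
    | pred n ih =>
      have h := hμstep (-(n:ℤ)-1)
      rw [show (-(n:ℤ)-1+1) = -(n:ℤ) from by ring, ih] at h
      rw [h, hqcast, ← ENNReal.ofReal_mul (by positivity)]
      congr 1
      rw [← zpow_one_add₀ hqne]
      congr 1
      ring
  -- integrability
  have hIntOn : ∀ s : Set K, μ s ≠ ⊤ → IntegrableOn Ψ s μ := by
    intro s hs
    exact Measure.integrableOn_of_bounded hs hcontΨ.aestronglyMeasurable
      (Filter.Eventually.of_forall (fun x => (habsΨ x).le))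
  have hIcoset : ∀ (c : K) (j : ℤ),
      ∫ x in Cset q c j, Ψ x ∂μ = Ψ c * ∫ x in pSet (K := K) q j, Ψ x ∂μ := by
    intro c j
    rw [Cset_eq_image, setIntegral_image_add]
    simp only [hΨadd]
    exact integral_const_mul _ _
  have hI0 : ∫ x in pSet (K := K) q 0, Ψ x ∂μ = 1 := by
    have h1 : Set.EqOn Ψ (fun _ => (1:ℂ)) (pSet (K := K) q 0) := by
      intro x hx
      refine hΨ1 x ?_
      have hx' : ‖x‖ ≤ (q:ℝ)^(-(0:ℤ)) := hx
      simpa using hx'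
    rw [setIntegral_congr_fun (pSet_measurable q 0) h1, setIntegral_const, measureReal_def, hμB 0]
    norm_num
  have hIneg : ∀ j : ℤ, j ≤ -1 → ∫ x in pSet (K := K) q j, Ψ x ∂μ = 0 := by
    intro j hj
    obtain ⟨z, hz1, hz2⟩ := hΨ2
    have hz1' : ‖z‖ ≤ (q:ℝ)^(-(-1:ℤ)) := hz1
    have himg : (fun y => z + y) '' (pSet (K := K) q j) = pSet (K := K) q j := by
      have hzj : ‖z‖ ≤ (q:ℝ)^(-j) :=
        le_trans hz1' ((zpow_le_zpow_iff_right₀ hq1R).mpr (by omega))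
      ext x
      constructor
      · rintro ⟨y, hy, rfl⟩
        show ‖z + y‖ ≤ _
        exact le_trans (IsUltrametricDist.norm_add_le_max _ _) (max_le hzj hy)
      · intro hx
        refine ⟨x - z, ?_, by ring⟩
        show ‖x - z‖ ≤ _
        rw [sub_eq_add_neg]
        refine le_trans (IsUltrametricDist.norm_add_le_max _ _) (max_le hx ?_)
        rwa [norm_neg]
    have h2 : ∫ x in pSet (K := K) q j, Ψ x ∂μ
        = Ψ z * ∫ x in pSet (K := K) q j, Ψ x ∂μ := by
      conv_lhs => rw [← himg]
      rw [setIntegral_image_add]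
      simp only [hΨadd]
      exact integral_const_mul _ _
    have h3 : (Ψ z - 1) * ∫ x in pSet (K := K) q j, Ψ x ∂μ = 0 := by
      rw [sub_mul, one_mul, ← h2, sub_self]
    rcases mul_eq_zero.mp h3 with h | h
    · exact absurd (sub_eq_zero.mp h) hz2
    · exact h
  -- the key shell computation
  have key : ∀ n : ℤ,
      (∫ x in {x : K | x ≠ 0 ∧ ord x = n}, Ψ x * nuHalf x * sgnP ord ϖ x * (‖x‖ : ℂ)⁻¹ ∂μ)
      = ((Real.sqrt ((q:ℝ)^(-n)) : ℂ) * (((q:ℝ)^(-n) : ℝ) : ℂ)⁻¹ * etaK (-1:K) ^ n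
          * ∫ x in pSet (K := K) q (n+1), Ψ x ∂μ)
        * ∑ a ∈ R₀.filter (fun a => ‖a‖ = 1), etaK a * Ψ (ϖ^n * a) := by
    intro n
    have hq_nn : (0:ℝ) < (q:ℝ)^(-n) := by positivity
    have hCnorm : ∀ a : K, ‖a‖ = 1 → ∀ x ∈ Cset q (ϖ^n * a) (n+1), ‖x‖ = (q:ℝ)^(-n) := by
      intro a ha x hx
      have hx' : ‖x - ϖ^n * a‖ ≤ (q:ℝ)^(-(n+1)) := hx
      have hc : ‖ϖ^n * a‖ = (q:ℝ)^(-n) := by rw [norm_mul, hϖpow, ha, mul_one]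
      have hlt : ‖x - ϖ^n * a‖ < ‖ϖ^n * a‖ := by
        rw [hc]
        exact lt_of_le_of_lt hx' ((zpow_lt_zpow_iff_right₀ hq1R).mpr (by omega))
      rw [norm_eq_of_norm_sub_lt hlt, hc]
    have hSn : {x : K | x ≠ 0 ∧ ord x = n}
        = ⋃ a ∈ R₀.filter (fun a => ‖a‖ = 1), Cset q (ϖ^n * a) (n+1) := by
      ext x
      simp only [Set.mem_iUnion, exists_prop, Set.mem_setOf_eq]
      constructor
      · rintro ⟨hx0, hxn⟩
        have hxnorm : ‖x‖ = (q:ℝ)^(-n) := by rw [hord x hx0, hxn]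
        have hy1 : ‖ϖ^(-n) * x‖ = 1 := by
          rw [norm_mul, hϖpow, hxnorm, ← zpow_add₀ hqne]
          norm_num
        obtain ⟨a, ⟨haR, hya⟩, -⟩ := hR₀.2 _ hy1.le
        have ha1 : ‖a‖ = 1 := by
          rw [← hy1]
          exact norm_eq_of_norm_sub_lt (by rwa [norm_sub_rev, hy1])
        refine ⟨a, Finset.mem_filter.mpr ⟨haR, ha1⟩, ?_⟩
        show ‖x - ϖ^n * a‖ ≤ (q:ℝ)^(-(n+1))
        have hϖn : ϖ^n * ϖ^(-n) = 1 := by rw [← zpow_add₀ hϖ0]; simp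
        have hxa : x - ϖ^n * a = ϖ^n * (ϖ^(-n) * x - a) := by
          calc x - ϖ^n * a = ϖ^n * ϖ^(-n) * x - ϖ^n * a := by rw [hϖn]; ring
          _ = _ := by ring
        rw [hxa, norm_mul, hϖpow]
        have h2 : ‖ϖ^(-n)*x - a‖ ≤ (q:ℝ)^(-1:ℤ) := (hlt1 _).mp hya
        calc (q:ℝ)^(-n) * ‖ϖ^(-n)*x - a‖ ≤ (q:ℝ)^(-n) * (q:ℝ)^(-1:ℤ) :=
              mul_le_mul_of_nonneg_left h2 (by positivity)
        _ = (q:ℝ)^(-(n+1)) := by rw [← zpow_add₀ hqne]; congr 1; ring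
      · rintro ⟨a, haRun, hx⟩
        obtain ⟨haR, ha1⟩ := Finset.mem_filter.mp haRun
        have hxnorm := hCnorm a ha1 x hx
        have hx0 : x ≠ 0 := by
          intro hc
          rw [hc, norm_zero] at hxnorm
          exact absurd hxnorm.symm (ne_of_gt hq_nn)
        exact ⟨hx0, hordeq hx0 hxnorm⟩
    have hdisjn : (↑(R₀.filter (fun a => ‖a‖ = 1)) : Set K).PairwiseDisjoint
        (fun a => Cset q (ϖ^n * a) (n+1)) := by
      intro a ha b hb hab
      rw [Function.onFun, Set.disjoint_left]
      intro x hxa hxb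
      have hxa' : ‖x - ϖ^n*a‖ ≤ (q:ℝ)^(-(n+1)) := hxa
      have hxb' : ‖x - ϖ^n*b‖ ≤ (q:ℝ)^(-(n+1)) := hxb
      have h1 : ‖ϖ^n*a - ϖ^n*b‖ ≤ (q:ℝ)^(-(n+1)) := by
        have hrw : ϖ^n*a - ϖ^n*b = -(x - ϖ^n*a) + (x - ϖ^n*b) := by ring
        rw [hrw]
        exact le_trans (IsUltrametricDist.norm_add_le_max _ _)
          (max_le (by rwa [norm_neg]) hxb')
      have h2 : ‖a - b‖ ≤ (q:ℝ)^(-1:ℤ) := by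
        rw [show ϖ^n*a - ϖ^n*b = ϖ^n*(a-b) from by ring, norm_mul, hϖpow] at h1
        have h3 : (q:ℝ)^(-(n+1)) = (q:ℝ)^(-n) * (q:ℝ)^(-1:ℤ) := by
          rw [← zpow_add₀ hqne]; congr 1; ring
        rw [h3] at h1
        exact le_of_mul_le_mul_left h1 (by positivity)
      have haR := (Finset.mem_filter.mp (Finset.mem_coe.mp ha)).1
      have hbR := (Finset.mem_filter.mp (Finset.mem_coe.mp hb)).1
      exact hab (hRinj R₀ hR₀ a haR b hbR (lt_of_le_of_lt h2 hqinvlt))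
    have hμC : ∀ a : K, μ (Cset q (ϖ^n * a) (n+1)) = ENNReal.ofReal ((q:ℝ)^(-(n+1))) := by
      intro a
      rw [Cset_eq_image, measure_image_add, hμB]
    have hIntC : ∀ a : K, IntegrableOn Ψ (Cset q (ϖ^n * a) (n+1)) μ := by
      intro a
      apply hIntOn
      rw [hμC]
      exact ENNReal.ofReal_ne_top
    have hEq : ∀ a ∈ R₀.filter (fun a => ‖a‖ = 1),
        Set.EqOn (fun x => Ψ x * nuHalf x * sgnP ord ϖ x * (‖x‖:ℂ)⁻¹)
        (fun x => ((Real.sqrt ((q:ℝ)^(-n)) : ℂ) * (((q:ℝ)^(-n) : ℝ) : ℂ)⁻¹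
          * etaK (-1:K) ^ n * etaK a) * Ψ x)
        (Cset q (ϖ^n * a) (n+1)) := by
      intro a haRun x hx
      obtain ⟨haR, ha1⟩ := Finset.mem_filter.mp haRun
      have hxnorm := hCnorm a ha1 x hx
      have hx0 : x ≠ 0 := by
        intro hc
        rw [hc, norm_zero] at hxnorm
        exact absurd hxnorm.symm (ne_of_gt hq_nn)
      have hordx : ord x = n := hordeq hx0 hxnorm
      have hη : etaK (x * ϖ^(-n)) = etaK a := by
        apply etaK_congr
        have hϖn : ϖ^(-n) * ϖ^n = 1 := by rw [← zpow_add₀ hϖ0]; simp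
        have h5 : x * ϖ^(-n) - a = ϖ^(-n) * (x - ϖ^n * a) := by
          calc x * ϖ^(-n) - a = ϖ^(-n) * x - (ϖ^(-n) * ϖ^n) * a := by rw [hϖn]; ring
          _ = _ := by ring
        have hx' : ‖x - ϖ^n * a‖ ≤ (q:ℝ)^(-(n+1)) := hx
        have h6 : ‖x * ϖ^(-n) - a‖ ≤ (q:ℝ)^(-1:ℤ) := by
          rw [h5, norm_mul, hϖpow]
          calc (q:ℝ)^(-(-n)) * ‖x - ϖ^n*a‖ ≤ (q:ℝ)^(-(-n)) * (q:ℝ)^(-(n+1)) :=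
                mul_le_mul_of_nonneg_left hx' (by positivity)
          _ = (q:ℝ)^(-1:ℤ) := by rw [← zpow_add₀ hqne]; congr 1; ring
        exact lt_of_le_of_lt h6 hqinvlt
      have hsgn : sgnP ord ϖ x = etaK a * etaK (-1:K) ^ n := by
        unfold sgnP
        rw [hordx, hη]
      show Ψ x * nuHalf x * sgnP ord ϖ x * (‖x‖:ℂ)⁻¹ = _
      rw [hsgn]
      unfold nuHalf
      rw [hxnorm]
      ring
    calc ∫ x in {x : K | x ≠ 0 ∧ ord x = n},
          Ψ x * nuHalf x * sgnP ord ϖ x * (‖x‖:ℂ)⁻¹ ∂μ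
        = ∑ a ∈ R₀.filter (fun a => ‖a‖ = 1), ∫ x in Cset q (ϖ^n * a) (n+1),
            Ψ x * nuHalf x * sgnP ord ϖ x * (‖x‖:ℂ)⁻¹ ∂μ := by
          rw [hSn]
          refine integral_biUnion_finset _ (fun a _ => Cset_measurable q _ _) hdisjn
            (fun a ha => ?_)
          exact IntegrableOn.congr_fun ((hIntC a).const_mul _)
            (fun x hx => (hEq a ha hx).symm) (Cset_measurable q _ _)
      _ = ∑ a ∈ R₀.filter (fun a => ‖a‖ = 1),
            ((Real.sqrt ((q:ℝ)^(-n)) : ℂ) * (((q:ℝ)^(-n) : ℝ) : ℂ)⁻¹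
              * etaK (-1:K) ^ n * etaK a)
            * (Ψ (ϖ^n * a) * ∫ x in pSet (K := K) q (n+1), Ψ x ∂μ) := by
          refine Finset.sum_congr rfl fun a ha => ?_
          rw [setIntegral_congr_fun (Cset_measurable q _ _) (hEq a ha),
            integral_const_mul, hIcoset]
      _ = _ := by
          rw [Finset.mul_sum]
          exact Finset.sum_congr rfl fun a ha => by ring
  -- sum of the quadratic character over units vanishes
  have hqsum0 : ∑ a ∈ R₀.filter (fun a => ‖a‖ = 1), etaK a = 0 := by
    have h1 : ∀ a ∈ R₀.filter (fun a => ‖a‖ = 1),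
        etaK a = ((quadraticChar (resF K) (redK K a) : ℤ) : ℂ) := by
      intro a ha
      exact etaK_eq_quadChar (Finset.mem_filter.mp ha).2
    have h3 : ∑ u ∈ Finset.univ.filter (fun u : resF K => u ≠ 0),
        ((quadraticChar (resF K) u : ℤ) : ℂ)
        = ∑ u : resF K, ((quadraticChar (resF K) u : ℤ) : ℂ) :=
      Finset.sum_filter_of_ne (fun u _ hfu h0 => hfu (by rw [h0]; simp))
    rw [Finset.sum_congr rfl h1,
      htransferU R₀ hR₀ (fun u => ((quadraticChar (resF K) u : ℤ) : ℂ)), h3]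
    have h2 := quadraticChar_sum_zero hchar2
    calc ∑ u : resF K, ((quadraticChar (resF K) u : ℤ) : ℂ)
        = ((∑ u : resF K, quadraticChar (resF K) u : ℤ) : ℂ) := by push_cast; rfl
      _ = 0 := by rw [h2]; simp
  -- vanishing away from n = -1
  have hvanish : ∀ n : ℤ, n ≠ -1 →
      (∫ x in {x : K | x ≠ 0 ∧ ord x = n},
        Ψ x * nuHalf x * sgnP ord ϖ x * (‖x‖:ℂ)⁻¹ ∂μ) = 0 := by
    intro n hn
    rw [key n]
    rcases lt_or_ge n (-1) with h | h
    · rw [hIneg (n+1) (by omega)]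
      ring
    · have h1 : ∀ a ∈ R₀.filter (fun a => ‖a‖ = 1),
          etaK a * Ψ (ϖ^n * a) = etaK a := by
        intro a ha
        have ha1 := (Finset.mem_filter.mp ha).2
        have h2 : ‖ϖ^n * a‖ ≤ 1 := by
          rw [norm_mul, hϖpow, ha1, mul_one]
          exact zpow_le_one_of_nonpos₀ hq1R.le (by omega)
        rw [hΨ1 _ h2, mul_one]
      rw [Finset.sum_congr rfl h1, hqsum0, mul_zero]
  refine ⟨hvanish, ?_⟩
  intro R hR
  -- the additive character of the residue field
  choose lft hlft1 hlft2 using redK_surj (K := K)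
  have hψwd : ∀ a : K, ‖a‖ ≤ 1 → Ψ (ϖ⁻¹ * a) = Ψ (ϖ⁻¹ * lft (redK K a)) := by
    intro a ha
    apply hΨeq
    have h1 : redK K (lft (redK K a)) = redK K a := hlft2 _
    have h2 : ‖a - lft (redK K a)‖ < 1 := by
      rw [← redK_eq_iff ha (hlft1 _)]
      exact h1.symm
    have h3 : ‖a - lft (redK K a)‖ ≤ (q:ℝ)^(-1:ℤ) := (hlt1 _).mp h2
    have h4 : ϖ⁻¹ * a - ϖ⁻¹ * lft (redK K a) = ϖ⁻¹ * (a - lft (redK K a)) := by ring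
    rw [h4, norm_mul, norm_inv, hnormϖ]
    calc ((q:ℝ)^(-1:ℤ))⁻¹ * ‖a - lft (redK K a)‖
        ≤ ((q:ℝ)^(-1:ℤ))⁻¹ * (q:ℝ)^(-1:ℤ) :=
          mul_le_mul_of_nonneg_left h3 (by positivity)
      _ = 1 := inv_mul_cancel₀ (by positivity)
  set ψq : resF K → ℂ := fun u => Ψ (ϖ⁻¹ * lft u) with hψqdef
  have hψval : ∀ a : K, ‖a‖ ≤ 1 → Ψ (ϖ⁻¹ * a) = ψq (redK K a) := fun a ha => hψwd a ha
  have hψadd : ∀ u v : resF K, ψq (u + v) = ψq u * ψq v := by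
    intro u v
    have hu := hlft1 u
    have hv := hlft1 v
    have huv : ‖lft u + lft v‖ ≤ 1 :=
      le_trans (IsUltrametricDist.norm_add_le_max _ _) (max_le hu hv)
    have h1 : redK K (lft u + lft v) = u + v := by
      rw [redK_add hu hv, hlft2, hlft2]
    have h2 : ψq (u + v) = Ψ (ϖ⁻¹ * (lft u + lft v)) := by
      rw [hψval _ huv, h1]
    rw [h2, mul_add, hΨadd]
  have hψnt : ∃ u : resF K, ψq u ≠ 1 := by
    obtain ⟨z, hz1, hz2⟩ := hΨ2
    have hz1' : ‖z‖ ≤ (q:ℝ)^(-(-1:ℤ)) := hz1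
    have hzϖ : ‖ϖ * z‖ ≤ 1 := by
      rw [norm_mul, hnormϖ]
      calc (q:ℝ)^(-1:ℤ) * ‖z‖ ≤ (q:ℝ)^(-1:ℤ) * (q:ℝ)^(-(-1:ℤ)) :=
            mul_le_mul_of_nonneg_left hz1' (by positivity)
        _ = 1 := by rw [← zpow_add₀ hqne]; norm_num
    refine ⟨redK K (ϖ * z), ?_⟩
    rw [← hψval _ hzϖ, ← mul_assoc, inv_mul_cancel₀ hϖ0, one_mul]
    exact hz2
  have hstar := gauss_star' hchar2 ψq hψadd hψnt
  -- assemble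
  rw [tsum_eq_single (-1 : ℤ) hvanish, key (-1)]
  have hI0' : ∫ x in pSet (K := K) q ((-1:ℤ)+1), Ψ x ∂μ = 1 := by
    rw [show ((-1:ℤ)+1) = 0 from by ring]
    exact hI0
  rw [hI0', mul_one]
  have hqq : ((q:ℝ)^(-(-1:ℤ))) = (q:ℝ) := by norm_num
  rw [hqq]
  have hetaneg : etaK (-1:K) = ((quadraticChar (resF K) (-1 : resF K) : ℤ) : ℂ) := by
    have h1 : redK K (-1 : K) = -1 := by
      rw [redK_neg (by simp : ‖(1:K)‖ ≤ 1), redK_one]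
    rw [← h1]
    exact etaK_eq_quadChar (by simp)
  have hetazpow : etaK (-1:K) ^ (-1:ℤ) = etaK (-1:K) := by
    rcases etaK_cases (-1:K) with h | h <;> rw [h] <;> norm_num
  have hsumL : ∑ a ∈ R₀.filter (fun a => ‖a‖ = 1), etaK a * Ψ (ϖ^(-1:ℤ) * a)
      = ∑ u : resF K, ((quadraticChar (resF K) u : ℤ):ℂ) * ψq u := by
    have h1 : ∀ a ∈ R₀.filter (fun a => ‖a‖ = 1),
        etaK a * Ψ (ϖ^(-1:ℤ) * a)
        = ((quadraticChar (resF K) (redK K a):ℤ):ℂ) * ψq (redK K a) := by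
      intro a ha
      obtain ⟨haR, ha1⟩ := Finset.mem_filter.mp ha
      rw [etaK_eq_quadChar ha1, zpow_neg_one, hψval a ha1.le]
    have h3 : ∑ u ∈ Finset.univ.filter (fun u : resF K => u ≠ 0),
        ((quadraticChar (resF K) u:ℤ):ℂ) * ψq u
        = ∑ u : resF K, ((quadraticChar (resF K) u:ℤ):ℂ) * ψq u :=
      Finset.sum_filter_of_ne (fun u _ hfu h0 => hfu (by rw [h0]; simp))
    rw [Finset.sum_congr rfl h1,
      htransferU R₀ hR₀ (fun u => ((quadraticChar (resF K) u:ℤ):ℂ) * ψq u), h3]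
  have hsumR : ∑ X ∈ R, Ψ ((-ϖ)^(-1:ℤ) * X^2) = ∑ v : resF K, ψq (-v^2) := by
    have h1 : ∀ X ∈ R, Ψ ((-ϖ)^(-1:ℤ) * X^2) = ψq (-(redK K X)^2) := by
      intro X hX
      have hX1 : ‖X‖ ≤ 1 := hR.1 X hX
      have hXX : ‖X * X‖ ≤ 1 := by
        rw [norm_mul]
        exact mul_le_one₀ hX1 (norm_nonneg X) hX1
      have hnn : ‖-(X * X)‖ ≤ 1 := by rwa [norm_neg]
      have h2 : (-ϖ)^(-1:ℤ) * X^2 = ϖ⁻¹ * (-(X * X)) := by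
        rw [zpow_neg_one, inv_neg]
        ring
      rw [h2, hψval _ hnn, redK_neg hXX, redK_mul hX1 hX1]
      congr 1
      rw [sq]
    rw [Finset.sum_congr rfl h1, htransfer R hR (fun v => ψq (-v^2))]
  have hsqrt2 : ((Real.sqrt (q:ℝ)) : ℂ) * ((Real.sqrt (q:ℝ)) : ℂ) = (((q:ℝ)) : ℂ) := by
    rw [← Complex.ofReal_mul, Real.mul_self_sqrt hq0R.le]
  have hsqrt0 : ((Real.sqrt (q:ℝ)) : ℂ) ≠ 0 := by
    simp only [Ne, Complex.ofReal_eq_zero]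
    positivity
  have hsqrt : ((Real.sqrt (q:ℝ)) : ℂ) * (((q:ℝ)) : ℂ)⁻¹ = ((Real.sqrt (q:ℝ)) : ℂ)⁻¹ := by
    rw [← hsqrt2, mul_inv, ← mul_assoc, mul_inv_cancel₀ hsqrt0, one_mul]
  calc ((Real.sqrt ((q:ℝ)) : ℂ) * (((q:ℝ) : ℝ) : ℂ)⁻¹ * etaK (-1:K) ^ (-1:ℤ))
        * ∑ a ∈ R₀.filter (fun a => ‖a‖ = 1), etaK a * Ψ (ϖ^(-1:ℤ) * a)
      = ((Real.sqrt (q:ℝ)) : ℂ)⁻¹ * (((quadraticChar (resF K) (-1 : resF K) : ℤ):ℂ)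
          * ∑ u : resF K, ((quadraticChar (resF K) u : ℤ):ℂ) * ψq u) := by
        rw [hetazpow, hetaneg, hsumL, ← hsqrt]
        ring
    _ = gaussSumK q Ψ ϖ (-1) R := by
        unfold gaussSumK
        rw [hsumR, hstar]
end
end

section
/- Let χ : K^× → ℂ^× be a continuous homomorphism trivial on 1 + 𝔭 but nontrivial on K^×, let u, v ∈ K^× with m = −ord(uv) ≥ 2, and write ν^α(x) = |x|^α for α ∈ ℂ. If ord(u) = ord(v), then J_{ν^α·χ}(u, v) = J_χ(u, v) for every α ∈ ℂ (the value is independent of α). If ord(u) = ord(v) + 2, then J_{ν^α·χ}(u, v) = q^α·J_χ(u, v) for every α ∈ ℂ. -/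
open MeasureTheory
open scoped Classical

noncomputable section

variable {K : Type}

set_option linter.unusedSectionVars false
section Aux

variable [NontriviallyNormedField K] [IsUltrametricDist K]
    [CompleteSpace K] [LocallyCompactSpace K] [MeasurableSpace K] [BorelSpace K]

lemma bt_norm_add_eq_of_lt {x t : K} (h : ‖t‖ < ‖x‖) : ‖x + t‖ = ‖x‖ := by
  rw [IsUltrametricDist.norm_add_eq_max_of_norm_ne_norm h.ne', max_eq_left h.le]

lemma bt_continuousAt_of_const_ball {f : K → ℂ} {x : K} {r : ℝ} (hr : 0 < r)
    (h : ∀ y : K, ‖y - x‖ < r → f y = f x) : ContinuousAt f x := by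
  have hev : f =ᶠ[nhds x] fun _ => f x := by
    filter_upwards [Metric.ball_mem_nhds x hr] with y hy
    exact h y (by rwa [mem_ball_iff_norm] at hy)
  exact hev.continuousAt

lemma bt_setIntegral_add_right (μ : Measure K) [μ.IsAddHaarMeasure]
    {S : Set K} (t : K) (hS : (fun x : K => x + t) ⁻¹' S = S) (f : K → ℂ) :
    ∫ x in S, f (x + t) ∂μ = ∫ x in S, f x ∂μ := by
  have hemb : MeasurableEmbedding (fun x : K => x + t) :=
    (MeasurableEquiv.addRight t).measurableEmbedding
  conv_rhs => rw [← map_add_right_eq_self μ t]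
  rw [hemb.setIntegral_map f S, hS]

lemma bt_integral_ball_char_zero (μ : Measure K) [μ.IsAddHaarMeasure]
    (Φ : K → ℂ) (hΦadd : ∀ x y : K, Φ (x + y) = Φ x * Φ y)
    {r : ℝ} (c t₁ : K) (ht₁ : ‖t₁‖ ≤ r) (hnt : Φ (c * t₁) ≠ 1) :
    ∫ t in {t : K | ‖t‖ ≤ r}, Φ (c * t) ∂μ = 0 := by
  set T : Set K := {t : K | ‖t‖ ≤ r} with hT
  have hpre : (fun x : K => x + t₁) ⁻¹' T = T := by
    ext x
    simp only [Set.mem_preimage, hT, Set.mem_setOf_eq]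
    constructor
    · intro h
      have h2 : ‖x + t₁ + -t₁‖ ≤ max ‖x + t₁‖ ‖-t₁‖ :=
        IsUltrametricDist.norm_add_le_max _ _
      simpa using h2.trans (max_le h (by simpa using ht₁))
    · intro h
      exact (IsUltrametricDist.norm_add_le_max x t₁).trans (max_le h ht₁)
  have key : ∫ t in T, Φ (c * t) ∂μ = (∫ t in T, Φ (c * t) ∂μ) * Φ (c * t₁) := by
    conv_lhs => rw [← bt_setIntegral_add_right μ t₁ hpre (fun t => Φ (c * t))]
    rw [show (fun t : K => Φ (c * (t + t₁))) = fun t : K => Φ (c * t) * Φ (c * t₁) by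
      funext t; rw [mul_add, hΦadd]]
    exact integral_mul_const _ _
  have h0 : (∫ t in T, Φ (c * t) ∂μ) * (1 - Φ (c * t₁)) = 0 := by
    linear_combination key
  rcases mul_eq_zero.mp h0 with h | h
  · exact h
  · exact absurd (sub_eq_zero.mp h).symm hnt

lemma bt_shell_vanish
    (q : ℕ) (hq_one : 1 < q)
    (ord : K → ℤ) (hord : ∀ x : K, x ≠ 0 → ‖x‖ = (q : ℝ) ^ (-ord x))
    (μ : Measure K) [μ.IsAddHaarMeasure]
    (Φ : K → ℂ) (hΦadd : ∀ x y : K, Φ (x + y) = Φ x * Φ y)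
    (hΦ1 : ∀ x : K, ‖x‖ ≤ 1 → Φ x = 1)
    (hΦ2 : ∃ x : K, x ∈ pSet q (-1) ∧ Φ x ≠ 1)
    (u v : K) (hu : u ≠ 0) (hv : v ≠ 0)
    (n : ℤ) (hne : ord u + n ≠ ord v - n)
    (hmin : min (ord u + n) (ord v - n) ≤ -2)
    (χ' : K → ℂ)
    (hχ'loc : ∀ x t : K, x ≠ 0 → ord x = n → ‖t‖ < ‖x‖ → χ' (x + t) = χ' x) :
    ∫ x in {x : K | x ≠ 0 ∧ ord x = n}, Φ (u * x + v * x⁻¹) * χ' x * (‖x‖ : ℂ)⁻¹ ∂μ = 0 := by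
  haveI : ProperSpace K :=
    ProperSpace.of_nontriviallyNormedField_of_weaklyLocallyCompactSpace K
  have hqR : (1:ℝ) < q := by exact_mod_cast hq_one
  have hq0 : (0:ℝ) < q := lt_trans zero_lt_one hqR
  have hqne0 : (q:ℝ) ≠ 0 := ne_of_gt hq0
  have hqne1 : (q:ℝ) ≠ 1 := ne_of_gt hqR
  have qpos : ∀ i : ℤ, 0 < (q:ℝ) ^ i := fun i => zpow_pos hq0 i
  have qm : ∀ i j : ℤ, (q:ℝ) ^ i * (q:ℝ) ^ j = (q:ℝ) ^ (i + j) :=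
    fun i j => (zpow_add₀ hqne0 i j).symm
  have qle : ∀ {i j : ℤ}, i ≤ j → (q:ℝ) ^ i ≤ (q:ℝ) ^ j :=
    fun h => zpow_le_zpow_right₀ hqR.le h
  have qlt : ∀ {i j : ℤ}, i < j → (q:ℝ) ^ i < (q:ℝ) ^ j :=
    fun h => zpow_lt_zpow_right₀ hqR h
  have qinj : ∀ {i j : ℤ}, (q:ℝ) ^ i = (q:ℝ) ^ j → i = j :=
    fun h => zpow_right_injective₀ hq0 hqne1 h
  have qinv : ∀ i : ℤ, ((q:ℝ) ^ i)⁻¹ = (q:ℝ) ^ (-i) := fun i => (zpow_neg _ i).symm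
  set a : ℤ := ord u + n with ha
  set b : ℤ := ord v - n with hb
  set M : ℤ := min a b with hM
  set k : ℤ := n - 1 - M with hk
  have hM2 : M ≤ -2 := hmin
  have hkn : n + 1 ≤ k := by omega
  set rn : ℝ := (q:ℝ) ^ (-n) with hrn_def
  set rk : ℝ := (q:ℝ) ^ (-k) with hrk_def
  have hrn : 0 < rn := qpos _
  have hrk : 0 < rk := qpos _
  have hrkn : rk < rn := qlt (by omega)
  -- the shell and the ball
  set S : Set K := {x : K | x ≠ 0 ∧ ord x = n} with hS_def
  set T : Set K := {t : K | ‖t‖ ≤ rk} with hT_def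
  have hSmem : ∀ x : K, x ∈ S ↔ ‖x‖ = rn := by
    intro x
    constructor
    · rintro ⟨hx, hxo⟩; rw [hord x hx, hxo]
    · intro h
      have hx : x ≠ 0 := by
        intro h0; rw [h0, norm_zero] at h; exact absurd h.symm (ne_of_gt hrn)
      refine ⟨hx, ?_⟩
      have := (hord x hx).symm.trans h
      have := qinj this
      omega
  have hSsphere : S = Metric.sphere (0:K) rn := by
    ext x; rw [hSmem x, mem_sphere_zero_iff_norm]
  have hTball : T = Metric.closedBall (0:K) rk := by
    ext t; rw [hT_def]; simp [mem_closedBall_zero_iff]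
  have hSm : MeasurableSet S := by rw [hSsphere]; exact Metric.isClosed_sphere.measurableSet
  have hTm : MeasurableSet T := by rw [hTball]; exact Metric.isClosed_closedBall.measurableSet
  have hScomp : IsCompact S := by rw [hSsphere]; exact isCompact_sphere 0 rn
  have hTcomp : IsCompact T := by rw [hTball]; exact isCompact_closedBall 0 rk
  -- the nontriviality witness
  obtain ⟨x₀, hx₀mem, hx₀⟩ := hΦ2
  have hx₀norm : ‖x₀‖ ≤ (q:ℝ) ^ (1:ℤ) := by simpa [pSet] using hx₀mem
  -- norms of u and v
  have hnormu : ‖u‖ = (q:ℝ) ^ (n - a) := by rw [hord u hu]; congr 1; omega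
  have hnormv : ‖v‖ = (q:ℝ) ^ (-(b + n)) := by rw [hord v hv]; congr 1; omega
  -- the linear coefficient
  set cf : K → K := fun x => u - v * (x⁻¹ * x⁻¹) with hcf_def
  have hcx : ∀ x : K, ‖x‖ = rn → ‖cf x‖ = (q:ℝ) ^ (n - M) ∧ cf x ≠ 0 := by
    intro x hx
    have hx0 : x ≠ 0 := by
      intro h0; rw [h0, norm_zero] at hx; exact absurd hx.symm (ne_of_gt hrn)
    have h1 : ‖v * (x⁻¹ * x⁻¹)‖ = (q:ℝ) ^ (n - b) := by
      rw [norm_mul, norm_mul, norm_inv, hx, hnormv, hrn_def, qinv, qm, qm]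
      congr 1; omega
    have hubn : ‖u‖ ≠ ‖-(v * (x⁻¹ * x⁻¹))‖ := by
      rw [norm_neg, hnormu, h1]
      intro h; have := qinj h; omega
    have hmax : ‖cf x‖ = max ‖u‖ ‖-(v * (x⁻¹ * x⁻¹))‖ := by
      rw [hcf_def]
      simpa [sub_eq_add_neg] using
        IsUltrametricDist.norm_add_eq_max_of_norm_ne_norm hubn
    have hnorm : ‖cf x‖ = (q:ℝ) ^ (n - M) := by
      rw [hmax, norm_neg, hnormu, h1]
      rcases le_or_gt a b with h | h
      · rw [hM, min_eq_left h, max_eq_left (qle (by omega))]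
      · rw [hM, min_eq_right h.le, max_eq_right (qle (by omega))]
    exact ⟨hnorm, by intro h0; rw [h0, norm_zero] at hnorm
                     exact absurd hnorm.symm (ne_of_gt (qpos _))⟩
  -- the inner integral vanishes
  have hinner : ∀ x : K, ‖x‖ = rn → ∫ t in T, Φ (cf x * t) ∂μ = 0 := by
    intro x hx
    obtain ⟨hcn, hc0⟩ := hcx x hx
    refine bt_integral_ball_char_zero μ Φ hΦadd (cf x) ((cf x)⁻¹ * x₀) ?_ ?_
    · rw [norm_mul, norm_inv, hcn, qinv]
      calc (q:ℝ) ^ (-(n - M)) * ‖x₀‖ ≤ (q:ℝ) ^ (-(n - M)) * (q:ℝ) ^ (1:ℤ) :=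
            mul_le_mul_of_nonneg_left hx₀norm (le_of_lt (qpos _))
        _ = (q:ℝ) ^ (-(n - M) + 1) := qm _ _
        _ = rk := by rw [hrk_def]; congr 1; omega
    · rw [mul_inv_cancel_left₀ hc0]; exact hx₀
  -- the integrand
  set F : K → ℂ := fun x => Φ (u * x + v * x⁻¹) * χ' x * (‖x‖ : ℂ)⁻¹ with hF_def
  -- pointwise transformation identity
  have hptF : ∀ x ∈ S, ∀ t ∈ T, F (x + t) = Φ (cf x * t) * F x := by
    intro x hxS t htT
    have hx : ‖x‖ = rn := (hSmem x).mp hxS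
    have hx0 : x ≠ 0 := hxS.1
    have ht : ‖t‖ ≤ rk := htT
    have htlt : ‖t‖ < ‖x‖ := by rw [hx]; exact lt_of_le_of_lt ht hrkn
    have hxt : ‖x + t‖ = ‖x‖ := bt_norm_add_eq_of_lt htlt
    have hxt0 : x + t ≠ 0 := by
      intro h0
      rw [h0, norm_zero, hx] at hxt
      exact absurd hxt (ne_of_lt hrn)
    set E : K := v * (t * t) * (x⁻¹ * x⁻¹) * (x + t)⁻¹ with hE_def
    have hid : u * (x + t) + v * (x + t)⁻¹ = (u * x + v * x⁻¹) + (cf x * t + E) := by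
      rw [hE_def, hcf_def]
      simp only
      linear_combination (v * (1 - t * x⁻¹) * x⁻¹) * (inv_mul_cancel₀ hxt0)
        - (v * (1 - t * x⁻¹) * (x + t)⁻¹) * (inv_mul_cancel₀ hx0)
    have hEb : ‖E‖ ≤ 1 := by
      have h1 : ‖E‖ = ‖v‖ * (‖t‖ * ‖t‖) * ((‖x‖⁻¹ * ‖x‖⁻¹) * ‖x‖⁻¹) := by
        simp only [hE_def, norm_mul, norm_inv, hxt]
        ring
      have h2 : ‖E‖ ≤ (q:ℝ) ^ (-(b + n)) * (rk * rk) * ((rn⁻¹ * rn⁻¹) * rn⁻¹) := by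
        rw [h1, hnormv, hx]
        gcongr <;> exact ht
      have h3 : (q:ℝ) ^ (-(b + n)) * (rk * rk) * ((rn⁻¹ * rn⁻¹) * rn⁻¹)
          = (q:ℝ) ^ (-(b + n) + -k + -k + (n + n + n)) := by
        rw [hrk_def, hrn_def, qinv, neg_neg, qm, qm, qm, qm, qm]
        congr 1; ring
      have h4 : (-(b + n) + -k + -k + (n + n + n) : ℤ) ≤ 0 := by
        rcases le_or_gt a b with h | h
        · have : M = a := by rw [hM, min_eq_left h]
          omega
        · have : M = b := by rw [hM, min_eq_right h.le]
          omega
      calc ‖E‖ ≤ (q:ℝ) ^ (-(b + n) + -k + -k + (n + n + n)) := h3 ▸ h2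
        _ ≤ (q:ℝ) ^ (0:ℤ) := qle h4
        _ = 1 := zpow_zero _
    rw [hF_def]
    simp only
    rw [hχ'loc x t hx0 hxS.2 htlt, hxt, hid]
    simp only [hΦadd]
    rw [hΦ1 E hEb]
    ring
  -- translation invariance of the shell
  have hpreS : ∀ t : K, ‖t‖ ≤ rk → (fun x : K => x + t) ⁻¹' S = S := by
    intro t ht
    ext x
    simp only [Set.mem_preimage]
    rw [hSmem, hSmem]
    constructor
    · intro h
      have h2 : ‖-t‖ < ‖x + t‖ := by
        rw [norm_neg, h]; exact lt_of_le_of_lt ht hrkn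
      have h4 := bt_norm_add_eq_of_lt h2
      have h3 : x + t + -t = x := by ring
      rw [h3] at h4
      rw [h4, h]
    · intro h
      have h2 : ‖t‖ < ‖x‖ := by rw [h]; exact lt_of_le_of_lt ht hrkn
      rw [bt_norm_add_eq_of_lt h2, h]
  set I : ℂ := ∫ x in S, F x ∂μ with hI_def
  have htrans : ∀ t ∈ T, I = ∫ x in S, Φ (cf x * t) * F x ∂μ := by
    intro t ht
    have h1 : ∫ x in S, F (x + t) ∂μ = I := bt_setIntegral_add_right μ t (hpreS t ht) F
    rw [← h1]
    exact setIntegral_congr_fun hSm (fun x hx => hptF x hx t ht)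
  -- measure facts
  have hμT_pos : 0 < μ T := by
    rw [hTball]
    exact lt_of_lt_of_le (Metric.measure_ball_pos μ 0 hrk)
      (measure_mono Metric.ball_subset_closedBall)
  have hμT_fin : μ T < ⊤ := hTcomp.measure_lt_top
  have hμS_fin : μ S < ⊤ := hScomp.measure_lt_top
  haveI : IsFiniteMeasure (μ.restrict T) :=
    ⟨by rwa [Measure.restrict_apply_univ]⟩
  haveI : IsFiniteMeasure (μ.restrict S) :=
    ⟨by rwa [Measure.restrict_apply_univ]⟩
  -- continuity of the pieces
  have hΦcont : Continuous Φ := by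
    rw [continuous_iff_continuousAt]
    intro x
    refine bt_continuousAt_of_const_ball one_pos (fun y hy => ?_)
    have h1 : Φ y = Φ x * Φ (y - x) := by rw [← hΦadd]; ring_nf
    rw [h1, hΦ1 _ hy.le, mul_one]
  have hχ'cont : ContinuousOn χ' S := by
    intro x hx
    apply ContinuousAt.continuousWithinAt
    refine bt_continuousAt_of_const_ball (show (0:ℝ) < rn from hrn) (fun y hy => ?_)
    have h1 : χ' (x + (y - x)) = χ' x :=
      hχ'loc x (y - x) hx.1 hx.2 (by rw [(hSmem x).mp hx]; exact hy)
    simpa using h1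
  have hFcont : ContinuousOn F S := by
    apply ContinuousOn.mul
    apply ContinuousOn.mul
    · apply hΦcont.comp_continuousOn
      exact (continuousOn_const.mul continuousOn_id).add
        (continuousOn_const.mul (continuousOn_id.inv₀ (fun x hx => hx.1)))
    · exact hχ'cont
    · apply ContinuousOn.inv₀
      · exact (Complex.continuous_ofReal.comp continuous_norm).continuousOn
      · intro x hx
        simp only [ne_eq, Complex.ofReal_eq_zero, norm_eq_zero]
        exact hx.1
  have hsub : ∀ p : K × K, p ∈ T ×ˢ S → p.2 ∈ S := fun p hp => hp.2
  have hGcont : ContinuousOn (fun p : K × K => Φ (cf p.2 * p.1) * F p.2) (T ×ˢ S) := by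
    apply ContinuousOn.mul
    · apply hΦcont.comp_continuousOn
      apply ContinuousOn.mul
      · apply ContinuousOn.sub continuousOn_const
        apply ContinuousOn.mul continuousOn_const
        have h2 : ContinuousOn (fun p : K × K => p.2⁻¹) (T ×ˢ S) :=
          continuous_snd.continuousOn.inv₀ (fun p hp => hp.2.1)
        exact h2.mul h2
      · exact continuous_fst.continuousOn
    · exact hFcont.comp continuous_snd.continuousOn hsub
  -- integrability on the product
  have hprodm : MeasurableSet (T ×ˢ S) := hTm.prod hSm
  have hGint : Integrable (Function.uncurry (fun t x : K => Φ (cf x * t) * F x))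
      ((μ.restrict T).prod (μ.restrict S)) := by
    rw [Measure.prod_restrict]
    obtain ⟨C, hC⟩ := (hTcomp.prod hScomp).exists_bound_of_continuousOn hGcont
    refine Integrable.mono' (g := fun _ => C) ?_ ?_ ?_
    · exact (integrableOn_const_iff).mpr (Or.inr (by
        rw [Measure.prod_prod]
        exact ENNReal.mul_lt_top hμT_fin hμS_fin))
    · exact hGcont.aestronglyMeasurable hprodm
    · exact (ae_restrict_mem hprodm).mono (fun p hp => hC p hp)
  -- putting it together
  have hfinal : (μ T).toReal • I = 0 := by
    calc (μ T).toReal • I = ∫ (_ : K) in T, I ∂μ := (setIntegral_const I).symm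
      _ = ∫ t in T, (∫ x in S, Φ (cf x * t) * F x ∂μ) ∂μ :=
          setIntegral_congr_fun hTm (fun t ht => htrans t ht)
      _ = ∫ x in S, (∫ t in T, Φ (cf x * t) * F x ∂μ) ∂μ := integral_integral_swap hGint
      _ = ∫ (_ : K) in S, (0:ℂ) ∂μ := by
          refine setIntegral_congr_fun hSm (fun x hx => ?_)
          rw [integral_mul_const, hinner x ((hSmem x).mp hx), zero_mul]
      _ = 0 := by simp
  have htne : (μ T).toReal ≠ 0 :=
    ne_of_gt (ENNReal.toReal_pos (ne_of_gt hμT_pos) (ne_of_lt hμT_fin))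
  rcases smul_eq_zero.mp hfinal with h | h
  · exact absurd h htne
  · exact h

end Aux

/-- unramified twists of mildly ramified Bessel functions. -/
theorem bessel_twist
    [NontriviallyNormedField K] [IsUltrametricDist K]
    [CompleteSpace K] [LocallyCompactSpace K] [MeasurableSpace K] [BorelSpace K]
    (q : ℕ) (hq_odd : Odd q) (hq_one : 1 < q)
    (hfin : ∃ R : Finset K, IsResidueSystem R ∧ R.card = q)
    (ord : K → ℤ) (hord : ∀ x : K, x ≠ 0 → ‖x‖ = (q : ℝ) ^ (-ord x))
    (ϖ : K) (hϖ0 : ϖ ≠ 0) (hϖ1 : ord ϖ = 1)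
    (μ : Measure K) [μ.IsAddHaarMeasure] (hμO : μ {x : K | ‖x‖ ≤ 1} = 1)
    (Φ : K → ℂ) (hΦadd : ∀ x y : K, Φ (x + y) = Φ x * Φ y)
    (hΦ1 : ∀ x : K, ‖x‖ ≤ 1 → Φ x = 1)
    (hΦ2 : ∃ x : K, x ∈ pSet q (-1) ∧ Φ x ≠ 1)
    (χ : K → ℂ) (hχmul : ∀ x y : K, x ≠ 0 → y ≠ 0 → χ (x * y) = χ x * χ y)
    (hχ0 : ∀ x : K, x ≠ 0 → χ x ≠ 0)
    (hχtriv : ∀ x : K, ‖x - 1‖ < 1 → χ x = 1)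
    (hχnt : ∃ x : K, x ≠ 0 ∧ χ x ≠ 1)
    (u v : K) (hu : u ≠ 0) (hv : v ≠ 0)
    (m : ℤ) (hm : m = -ord (u * v)) (hm2 : 2 ≤ m) :
    (ord u = ord v → ∀ α : ℂ,
        bessel μ Φ ord (fun x => (‖x‖ : ℂ) ^ α * χ x) u v = bessel μ Φ ord χ u v) ∧
    (ord u = ord v + 2 → ∀ α : ℂ,
        bessel μ Φ ord (fun x => (‖x‖ : ℂ) ^ α * χ x) u v =
          (q : ℂ) ^ α * bessel μ Φ ord χ u v) := by
  have hqR : (1:ℝ) < q := by exact_mod_cast hq_one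
  have hq0 : (0:ℝ) < q := lt_trans zero_lt_one hqR
  have hqne0 : (q:ℝ) ≠ 0 := ne_of_gt hq0
  have hqne1 : (q:ℝ) ≠ 1 := ne_of_gt hqR
  have qinj : ∀ {i j : ℤ}, (q:ℝ) ^ i = (q:ℝ) ^ j → i = j :=
    fun h => zpow_right_injective₀ hq0 hqne1 h
  have hordadd : ord (u * v) = ord u + ord v := by
    have h1 := hord (u * v) (mul_ne_zero hu hv)
    rw [norm_mul, hord u hu, hord v hv, ← zpow_add₀ hqne0] at h1
    have := qinj h1
    omega
  have hχloc : ∀ x t : K, x ≠ 0 → ‖t‖ < ‖x‖ → χ (x + t) = χ x := by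
    intro x t hx ht
    have hx0 : (0:ℝ) < ‖x‖ := norm_pos_iff.mpr hx
    have hε : ‖x⁻¹ * t‖ < 1 := by
      rw [norm_mul, norm_inv]
      calc ‖x‖⁻¹ * ‖t‖ < ‖x‖⁻¹ * ‖x‖ := mul_lt_mul_of_pos_left ht (inv_pos.mpr hx0)
        _ = 1 := inv_mul_cancel₀ (ne_of_gt hx0)
    have h1 : (1:K) + x⁻¹ * t ≠ 0 := by
      intro h
      have h2 : x⁻¹ * t = -1 := by linear_combination h
      rw [h2] at hε
      simp at hε
    have h2 : x + t = x * (1 + x⁻¹ * t) := by field_simp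
    have h3 : χ (1 + x⁻¹ * t) = 1 := by
      apply hχtriv
      rw [add_sub_cancel_left]
      exact hε
    rw [h2, hχmul x _ hx h1, h3, mul_one]
  have hSmem : ∀ (i : ℤ) (x : K), x ∈ {x : K | x ≠ 0 ∧ ord x = i} ↔ ‖x‖ = (q:ℝ) ^ (-i) := by
    intro i x
    constructor
    · rintro ⟨hx, hxo⟩; rw [hord x hx, hxo]
    · intro h
      have hx : x ≠ 0 := by
        intro h0; rw [h0, norm_zero] at h
        exact absurd h.symm (ne_of_gt (zpow_pos hq0 _))
      have := qinj ((hord x hx).symm.trans h)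
      exact ⟨hx, by omega⟩
  have hSm : ∀ i : ℤ, MeasurableSet {x : K | x ≠ 0 ∧ ord x = i} := by
    intro i
    have h : {x : K | x ≠ 0 ∧ ord x = i} = Metric.sphere (0:K) ((q:ℝ) ^ (-i)) := by
      ext x; rw [hSmem i x, mem_sphere_zero_iff_norm]
    rw [h]
    exact Metric.isClosed_sphere.measurableSet
  have happ : ∀ (n : ℤ), ord u + n ≠ ord v - n → ∀ (χ' : K → ℂ),
      (∀ x t : K, x ≠ 0 → ord x = n → ‖t‖ < ‖x‖ → χ' (x + t) = χ' x) →
      ∫ x in {x : K | x ≠ 0 ∧ ord x = n}, Φ (u * x + v * x⁻¹) * χ' x * (‖x‖ : ℂ)⁻¹ ∂μ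
        = 0 := by
    intro n hne χ' hloc
    have hminle : min (ord u + n) (ord v - n) ≤ -2 := by
      rcases le_total (ord u + n) (ord v - n) with h | h
      · rw [min_eq_left h]; omega
      · rw [min_eq_right h]; omega
    exact bt_shell_vanish q hq_one ord hord μ Φ hΦadd hΦ1 hΦ2 u v hu hv n hne hminle χ' hloc
  have hlocχ : ∀ (n : ℤ), ∀ x t : K, x ≠ 0 → ord x = n → ‖t‖ < ‖x‖ → χ (x + t) = χ x :=
    fun _ x t hx _ ht => hχloc x t hx ht
  have hlocνχ : ∀ (α : ℂ) (n : ℤ), ∀ x t : K, x ≠ 0 → ord x = n → ‖t‖ < ‖x‖ →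
      ((‖x + t‖ : ℂ) ^ α * χ (x + t)) = ((‖x‖ : ℂ) ^ α * χ x) := by
    intro α n x t hx _ ht
    rw [bt_norm_add_eq_of_lt ht, hχloc x t hx ht]
  constructor
  · intro huv α
    simp only [bessel]
    rw [tsum_eq_single (0:ℤ) (fun n hn => happ n (by omega) _ (hlocνχ α n)),
      tsum_eq_single (0:ℤ) (fun n hn => happ n (by omega) _ (hlocχ n))]
    refine setIntegral_congr_fun (hSm 0) (fun x hx => ?_)
    have hxn : ‖x‖ = 1 := by
      have := (hSmem 0 x).mp hx
      simpa using this
    rw [hxn]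
    simp [Complex.one_cpow]
  · intro huv α
    simp only [bessel]
    rw [tsum_eq_single (-1:ℤ) (fun n hn => happ n (by omega) _ (hlocνχ α n)),
      tsum_eq_single (-1:ℤ) (fun n hn => happ n (by omega) _ (hlocχ n)),
      ← integral_const_mul]
    refine setIntegral_congr_fun (hSm (-1)) (fun x hx => ?_)
    have hxn : ‖x‖ = (q:ℝ) := by
      have := (hSmem (-1) x).mp hx
      simpa using this
    rw [hxn, Complex.ofReal_natCast]
    ring
end
end
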